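/- arXiv:2402.13633 — 7 statements merged into one kernel-verified Lean document; each statement's English description precedes it below -/
import Mathlib

section
/- Let R be a (possibly noncommutative, associative, unital) ring and I a right ideal of R that is not finitely generated as a right R-module. If every proper R-submodule of I is finitely generated, then I² = 0. -/
/-- If a right ideal `I` of a ring `R` is not finitely generated but every proper
right `R`-submodule of `I` is finitely generated, then `I² = 0`. -/
theorem stmt_0 {R : Type*} [Ring R] (I : Submodule Rᵐᵒᵖ R)
    (hI : ¬ I.FG) (hsub : ∀ J : Submodule Rᵐᵒᵖ R, J < I → J.FG) :
    ∀ x ∈ I, ∀ y ∈ I, x * y = 0 := by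
  intro x hx y hy
  by_contra hxy
  have hsmul : ∀ (z : R), (MulOpposite.op z) • x = x * z := fun z => rfl
  let f : R →ₗ[Rᵐᵒᵖ] R :=
    { toFun := fun z => x * z
      map_add' := fun a b => mul_add x a b
      map_smul' := fun r a => by
        simp only [MulOpposite.smul_eq_mul_unop, RingHom.id_apply, mul_assoc] }
  apply hI
  apply Submodule.fg_of_fg_map_of_fg_inf_ker f
  · apply hsub
    constructor
    · rintro u hu
      rcases Submodule.mem_map.mp hu with ⟨z, hz, rfl⟩
      show x * z ∈ I
      rw [← hsmul]
      exact I.smul_mem _ hx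
    · intro hle
      apply hI
      have h1 : I ≤ Submodule.span Rᵐᵒᵖ {x} := by
        intro u hu
        rcases Submodule.mem_map.mp (hle hu) with ⟨z, hz, rfl⟩
        show x * z ∈ _
        rw [← hsmul]
        exact Submodule.smul_mem _ _ (Submodule.mem_span_singleton_self x)
      have h2 : Submodule.span Rᵐᵒᵖ {x} ≤ I :=
        Submodule.span_le.mpr (by simpa using hx)
      exact le_antisymm h1 h2 ▸ ⟨{x}, by simp [le_antisymm h1 h2]⟩
  · apply hsub
    refine lt_of_le_of_ne inf_le_left ?_
    intro h
    have : y ∈ I ⊓ LinearMap.ker f := by rw [h]; exact hy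
    exact hxy this.2
end

section
/- Let R be a ring and C a central proper subring of R such that every proper subring of R containing C is right Noetherian. If a right ideal I of R is not finitely generated as a right R-module, then I² ⊆ (I ∩ C)R. -/
open MulOpposite

section Aux

variable {R : Type*} [Ring R]

theorem smul_def (c : Rᵐᵒᵖ) (a : R) : c • a = a * unop c := rfl

/-- The subring `C + J` where `C` is a central subring and `J` a right ideal. -/
def mkS (C : Subring R) (hC : C ≤ Subring.center R) (J : Submodule Rᵐᵒᵖ R) : Subring R where
  carrier := {r | ∃ c ∈ C, ∃ j ∈ J, c + j = r}
  one_mem' := ⟨1, C.one_mem, 0, J.zero_mem, by simp⟩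
  zero_mem' := ⟨0, C.zero_mem, 0, J.zero_mem, by simp⟩
  add_mem' := by
    rintro a b ⟨c, hc, j, hj, rfl⟩ ⟨c', hc', j', hj', rfl⟩
    exact ⟨c + c', add_mem hc hc', j + j', add_mem hj hj', by abel⟩
  neg_mem' := by
    rintro a ⟨c, hc, j, hj, rfl⟩
    exact ⟨-c, neg_mem hc, -j, neg_mem hj, by abel⟩
  mul_mem' := by
    rintro a b ⟨c, hc, j, hj, rfl⟩ ⟨c', hc', j', hj', rfl⟩
    have h1 : c * j' ∈ J := by
      have : c * j' = op c • j' := by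
        rw [op_smul_eq_mul, Subring.mem_center_iff.mp (hC hc) j']
      rw [this]; exact J.smul_mem _ hj'
    have h2 : j * c' ∈ J := by
      have : j * c' = op c' • j := by rw [op_smul_eq_mul]
      rw [this]; exact J.smul_mem _ hj
    have h3 : j * j' ∈ J := by
      have : j * j' = op j' • j := by rw [op_smul_eq_mul]
      rw [this]; exact J.smul_mem _ hj
    refine ⟨c * c', mul_mem hc hc', c * j' + (j * c' + j * j'),
      add_mem h1 (add_mem h2 h3), ?_⟩
    rw [add_mul, mul_add, mul_add]; abel

theorem C_le_mkS (C : Subring R) (hC : C ≤ Subring.center R) (J : Submodule Rᵐᵒᵖ R) :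
    C ≤ mkS C hC J := fun c hc => ⟨c, hc, 0, J.zero_mem, add_zero c⟩

theorem J_le_mkS (C : Subring R) (hC : C ≤ Subring.center R) (J : Submodule Rᵐᵒᵖ R) :
    ∀ j ∈ J, j ∈ mkS C hC J := fun j hj => ⟨0, C.zero_mem, j, hj, zero_add j⟩

/-- If `C + J` is a proper subring, then `J` is a finitely generated right ideal. -/
theorem fg_of_proper (C : Subring R) (hC : C ≤ Subring.center R)
    (hNoeth : ∀ S : Subring R, C ≤ S → S ≠ ⊤ → IsNoetherianRing Sᵐᵒᵖ)
    (J : Submodule Rᵐᵒᵖ R) (hne : mkS C hC J ≠ ⊤) : J.FG := by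
  set S := mkS C hC J with hS
  have hN : IsNoetherianRing Sᵐᵒᵖ := hNoeth S (C_le_mkS C hC J) hne
  haveI hN' : IsNoetherian Sᵐᵒᵖ Sᵐᵒᵖ := isNoetherianRing_iff.mp hN
  -- J as a right ideal of S
  let J'' : Submodule Sᵐᵒᵖ Sᵐᵒᵖ :=
  { carrier := {s | ((unop s : S) : R) ∈ J}
    add_mem' := by
      intro a b ha hb
      show ((unop (a + b) : S) : R) ∈ J
      rw [unop_add]; push_cast
      exact add_mem ha hb
    zero_mem' := by
      show ((unop (0 : Sᵐᵒᵖ) : S) : R) ∈ J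
      rw [unop_zero]
      simpa using J.zero_mem
    smul_mem' := by
      intro c s hs
      show ((unop (c • s) : S) : R) ∈ J
      rw [smul_eq_mul, unop_mul]; push_cast
      have := J.smul_mem (op ((unop c : S) : R)) hs
      rwa [op_smul_eq_mul] at this }
  classical
  obtain ⟨F, hF⟩ := hN'.noetherian J''
  refine ⟨F.image (fun s => ((unop s : S) : R)), ?_⟩
  apply le_antisymm
  · rw [Submodule.span_le]
    rintro r hr
    simp only [Finset.coe_image, Set.mem_image, Finset.mem_coe] at hr
    obtain ⟨s, hsF, rfl⟩ := hr
    have : s ∈ J'' := hF ▸ Submodule.subset_span hsF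
    exact this
  · intro j hj
    have hjS : j ∈ S := J_le_mkS C hC J j hj
    have hs : (op (⟨j, hjS⟩ : S) : Sᵐᵒᵖ) ∈ Submodule.span Sᵐᵒᵖ (F : Set Sᵐᵒᵖ) := by
      rw [hF]; exact hj
    have key : ∀ t ∈ Submodule.span Sᵐᵒᵖ (F : Set Sᵐᵒᵖ),
        ((unop t : S) : R) ∈
          Submodule.span Rᵐᵒᵖ ((fun s => ((unop s : S) : R)) '' (F : Set Sᵐᵒᵖ)) := by
      intro t ht
      induction ht using Submodule.span_induction with
      | mem u hu => exact Submodule.subset_span ⟨u, hu, rfl⟩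
      | zero => simp
      | add u v _ _ hu hv =>
          rw [unop_add]; push_cast
          exact add_mem hu hv
      | smul c u _ hu =>
          rw [smul_eq_mul, unop_mul]; push_cast
          have := Submodule.smul_mem _ (op ((unop c : S) : R)) hu
          rwa [op_smul_eq_mul] at this
    have hkey := key _ hs
    rwa [← Finset.coe_image] at hkey

end Aux

/-- If `C` is a central proper subring of `R` such that every proper subring of `R`
containing `C` is right Noetherian, and `I` is a right ideal of `R` that is not
finitely generated, then `I² ⊆ (I ∩ C)R`. -/
theorem stmt_1 {R : Type*} [Ring R] (C : Subring R)
    (hC : C ≤ Subring.center R) (hCp : C ≠ ⊤)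
    (hNoeth : ∀ S : Subring R, C ≤ S → S ≠ ⊤ → IsNoetherianRing Sᵐᵒᵖ)
    (I : Submodule Rᵐᵒᵖ R) (hI : ¬ I.FG) :
    ∀ x ∈ I, ∀ y ∈ I, x * y ∈ Submodule.span Rᵐᵒᵖ ((I : Set R) ∩ (C : Set R)) := by
  classical
  intro x hx y hy
  set K : Submodule Rᵐᵒᵖ R := Submodule.span Rᵐᵒᵖ ((I : Set R) ∩ (C : Set R)) with hK
  show x * y ∈ K
  -- K ≤ I
  have hKI : K ≤ I := by
    rw [hK, Submodule.span_le]; exact fun r hr => hr.1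
  -- K is a two-sided ideal
  have hK2 : ∀ (r : R), ∀ k ∈ K, r * k ∈ K := by
    intro r k hk
    rw [hK] at hk
    induction hk using Submodule.span_induction with
    | mem u hu =>
        have hcen : ∀ g : R, g * u = u * g := Subring.mem_center_iff.mp (hC hu.2)
        have : r * u = op r • u := by rw [op_smul_eq_mul, hcen r]
        rw [this]
        exact Submodule.smul_mem _ _ (Submodule.subset_span hu)
    | zero => simpa using K.zero_mem
    | add u v _ _ hu hv => rw [mul_add]; exact add_mem hu hv
    | smul c u _ hu =>
        rw [smul_def, ← mul_assoc, ← smul_def]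
        exact Submodule.smul_mem K c hu
  -- properness criterion
  have mkS_ne_top : ∀ J : Submodule Rᵐᵒᵖ R, K ≤ J → J ≤ I → J ≠ I → mkS C hC J ≠ ⊤ := by
    intro J hKJ hJI hne htop
    apply hne
    refine le_antisymm hJI (fun a ha => ?_)
    have haS : a ∈ mkS C hC J := htop ▸ Subring.mem_top a
    obtain ⟨c, hc, j, hj, hcja⟩ := haS
    have hcI : c ∈ I := by
      have : c = a - j := by rw [← hcja]; abel
      rw [this]; exact sub_mem ha (hJI hj)
    have hcK : c ∈ K := Submodule.subset_span ⟨hcI, hc⟩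
    rw [← hcja]
    exact add_mem (hKJ hcK) hj
  by_cases hT : mkS C hC K = ⊤
  · -- R = C + K : direct computation
    have hyS : y ∈ mkS C hC K := hT ▸ Subring.mem_top y
    obtain ⟨c, hc, k, hk, hcky⟩ := hyS
    have hcI : c ∈ I := by
      have : c = y - k := by rw [← hcky]; abel
      rw [this]; exact sub_mem hy (hKI hk)
    have hcK : c ∈ K := Submodule.subset_span ⟨hcI, hc⟩
    have h1 : x * c ∈ K := by
      have : x * c = op x • c := by
        rw [op_smul_eq_mul, Subring.mem_center_iff.mp (hC hc) x]
      rw [this]; exact K.smul_mem _ hcK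
    have h2 : x * k ∈ K := hK2 x k hk
    have hxy' : x * y = x * c + x * k := by rw [← hcky, mul_add]
    rw [hxy']
    exact add_mem h1 h2
  · -- C + K proper: K is f.g.
    have hKfg : K.FG := fg_of_proper C hC hNoeth K hT
    by_contra hxy
    apply hI
    -- W = {a ∈ I | x * a ∈ K}
    let W : Submodule Rᵐᵒᵖ R :=
    { carrier := {a | a ∈ I ∧ x * a ∈ K}
      add_mem' := by
        rintro a b ⟨haI, haK⟩ ⟨hbI, hbK⟩
        exact ⟨add_mem haI hbI, by rw [mul_add]; exact add_mem haK hbK⟩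
      zero_mem' := ⟨I.zero_mem, by simpa using K.zero_mem⟩
      smul_mem' := by
        rintro c a ⟨haI, haK⟩
        refine ⟨I.smul_mem c haI, ?_⟩
        rw [smul_def, ← mul_assoc, ← smul_def]
        exact K.smul_mem c haK }
    have hWI : W ≤ I := fun a ha => ha.1
    have hKW : K ≤ W := fun k hk => ⟨hKI hk, hK2 x k hk⟩
    have hWne : W ≠ I := by
      intro h
      exact hxy (h ▸ hy : y ∈ W).2
    have hWfg : W.FG := fg_of_proper C hC hNoeth W (mkS_ne_top W hKW hWI hWne)
    -- Y = xI + K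
    let Y : Submodule Rᵐᵒᵖ R :=
    { carrier := {r | ∃ a ∈ I, ∃ k ∈ K, x * a + k = r}
      add_mem' := by
        rintro r r' ⟨a, ha, k, hk, rfl⟩ ⟨a', ha', k', hk', rfl⟩
        exact ⟨a + a', add_mem ha ha', k + k', add_mem hk hk', by rw [mul_add]; abel⟩
      zero_mem' := ⟨0, I.zero_mem, 0, K.zero_mem, by simp⟩
      smul_mem' := by
        rintro c r ⟨a, ha, k, hk, rfl⟩
        refine ⟨a * unop c, ?_, k * unop c, ?_, ?_⟩
        · rw [← smul_def]; exact I.smul_mem c ha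
        · rw [← smul_def]; exact K.smul_mem c hk
        · rw [smul_def, add_mul, mul_assoc] }
    have hYI : Y ≤ I := by
      rintro r ⟨a, ha, k, hk, rfl⟩
      refine add_mem ?_ (hKI hk)
      have := I.smul_mem (op a) hx
      rwa [op_smul_eq_mul] at this
    have hKY : K ≤ Y := fun k hk => ⟨0, I.zero_mem, k, hk, by simp⟩
    by_cases hYtop : Y = I
    · -- I = xR + K is f.g.
      obtain ⟨Fk, hFk⟩ := hKfg
      refine ⟨insert x Fk, le_antisymm ?_ ?_⟩
      · rw [Submodule.span_le]
        intro r hr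
        simp only [Finset.coe_insert, Set.mem_insert_iff, Finset.mem_coe] at hr
        rcases hr with rfl | hr
        · exact hx
        · exact hKI (hFk ▸ Submodule.subset_span hr)
      · intro a ha
        have : a ∈ Y := hYtop ▸ ha
        obtain ⟨b, hb, k, hk, rfl⟩ := this
        refine add_mem ?_ ?_
        · have hxs : x ∈ Submodule.span Rᵐᵒᵖ ((insert x Fk : Finset R) : Set R) :=
            Submodule.subset_span (by simp)
          have := Submodule.smul_mem _ (op b) hxs
          rwa [op_smul_eq_mul] at this
        · have : K ≤ Submodule.span Rᵐᵒᵖ ((insert x Fk : Finset R) : Set R) := by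
            rw [← hFk]
            apply Submodule.span_mono
            intro r hr; simp only [Finset.coe_insert, Set.mem_insert_iff, Finset.mem_coe]
            exact Or.inr hr
          exact this hk
    · -- Y proper in I, so f.g.; deduce I f.g.
      have hYfg : Y.FG := fg_of_proper C hC hNoeth Y (mkS_ne_top Y hKY hYI hYtop)
      obtain ⟨G, hG⟩ := hYfg
      have hGY : ∀ g ∈ G, ∃ a, a ∈ I ∧ g - x * a ∈ K := by
        intro g hg
        have : g ∈ Y := hG ▸ Submodule.subset_span hg
        obtain ⟨a, ha, k, hk, hk'⟩ := this
        exact ⟨a, ha, by rw [← hk']; simpa using hk⟩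
      choose! f hfI hfK using hGY
      set N : Submodule Rᵐᵒᵖ R := Submodule.span Rᵐᵒᵖ ((G.image f : Finset R) : Set R) with hN
      have hNI : N ≤ I := by
        rw [hN, Submodule.span_le]
        intro r hr
        simp only [Finset.coe_image, Set.mem_image, Finset.mem_coe] at hr
        obtain ⟨g, hg, rfl⟩ := hr
        exact hfI g hg
      -- Q = {r | ∃ n ∈ N, r - x*n ∈ K}
      let Q : Submodule Rᵐᵒᵖ R :=
      { carrier := {r | ∃ n ∈ N, r - x * n ∈ K}
        add_mem' := by
          rintro r r' ⟨n, hn, hr⟩ ⟨n', hn', hr'⟩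
          refine ⟨n + n', add_mem hn hn', ?_⟩
          have : r + r' - x * (n + n') = (r - x * n) + (r' - x * n') := by
            rw [mul_add]; abel
          rw [this]; exact add_mem hr hr'
        zero_mem' := ⟨0, N.zero_mem, by simpa using K.zero_mem⟩
        smul_mem' := by
          rintro c r ⟨n, hn, hr⟩
          refine ⟨n * unop c, ?_, ?_⟩
          · rw [← smul_def]; exact N.smul_mem c hn
          · have heq : c • r - x * (n * unop c) = (r - x * n) * unop c := by
              rw [smul_def, sub_mul, mul_assoc]
            rw [heq, ← smul_def]
            exact K.smul_mem c hr }
      have hYQ : Y ≤ Q := by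
        rw [← hG, Submodule.span_le]
        intro g hg
        exact ⟨f g, Submodule.subset_span (by
          simp only [Finset.coe_image, Set.mem_image, Finset.mem_coe]
          exact ⟨g, hg, rfl⟩), hfK g hg⟩
      -- I = W ⊔ N
      have hIWN : I = W ⊔ N := by
        refine le_antisymm ?_ (sup_le hWI hNI)
        intro b hb
        have hxb : x * b ∈ Y := by
          refine ⟨b, hb, 0, K.zero_mem, by simp⟩
        obtain ⟨n, hn, hbn⟩ := hYQ hxb
        have hbW : b - n ∈ W := by
          refine ⟨sub_mem hb (hNI hn), ?_⟩
          rw [mul_sub]; exact hbn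
        have : b = (b - n) + n := by abel
        rw [this]
        exact add_mem (Submodule.mem_sup_left hbW) (Submodule.mem_sup_right hn)
      rw [hIWN]
      exact Submodule.FG.sup hWfg ⟨G.image f, rfl⟩
end

section
/- Let R be a ring and C a central proper subring of R such that every proper subring of R containing C is right Noetherian. If there exists a right ideal I of R with I not finitely generated and I² = 0, then R is commutative. -/
/-- If `C` is a central proper subring of `R` such that every proper subring of `R`
containing `C` is right Noetherian, and there is a right ideal `I` of `R` that is
not finitely generated with `I² = 0`, then `R` is commutative. -/
theorem stmt_2 {R : Type*} [Ring R] (C : Subring R)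
    (hC : C ≤ Subring.center R) (hCp : C ≠ ⊤)
    (hNoeth : ∀ S : Subring R, C ≤ S → S ≠ ⊤ → IsNoetherianRing Sᵐᵒᵖ)
    (I : Submodule Rᵐᵒᵖ R) (hI : ¬ I.FG)
    (hsq : ∀ x ∈ I, ∀ y ∈ I, x * y = 0) :
    ∀ a b : R, a * b = b * a := by
  classical
  set s : Set R := (C : Set R) ∪ (I : Set R) with hs
  set S : Subring R := Subring.closure s with hSdef
  have hCS : C ≤ S := fun x hx => Subring.subset_closure (Or.inl hx)
  have hIS : (I : Set R) ⊆ (S : Set R) := fun x hx => Subring.subset_closure (Or.inr hx)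
  -- S must be all of R
  have hStop : S = ⊤ := by
    by_contra hne
    haveI := hNoeth S hCS hne
    -- I as a right ideal of S
    let J : Submodule Sᵐᵒᵖ Sᵐᵒᵖ :=
      { carrier := {x | ((MulOpposite.unop x : S) : R) ∈ I}
        add_mem' := fun {a b} ha hb => by
          simpa using add_mem (ha : _ ∈ I) hb
        zero_mem' := by simp
        smul_mem' := fun r x hx => by
          have : ((MulOpposite.unop x : S) : R) * ((MulOpposite.unop r : S) : R) ∈ I :=
            I.smul_mem (MulOpposite.op (((MulOpposite.unop r : S) : R))) hx
          simpa using this }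
    have hJfg : J.FG := IsNoetherian.noetherian J
    obtain ⟨T, hT⟩ := hJfg
    -- push generators down to R
    apply hI
    refine ⟨T.image (fun x => ((MulOpposite.unop x : S) : R)), ?_⟩
    apply le_antisymm
    · rw [Submodule.span_le]
      intro y hy
      simp only [Finset.coe_image, Set.mem_image] at hy
      obtain ⟨x, hxT, rfl⟩ := hy
      have hxJ : x ∈ J := hT ▸ Submodule.subset_span hxT
      exact hxJ
    · intro m hm
      have hmS : m ∈ S := hIS hm
      have hmJ : MulOpposite.op (⟨m, hmS⟩ : S) ∈ J := hm
      rw [← hT] at hmJ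
      -- span induction
      have : ∀ x ∈ Submodule.span Sᵐᵒᵖ (T : Set Sᵐᵒᵖ),
          ((MulOpposite.unop x : S) : R) ∈
            Submodule.span Rᵐᵒᵖ ((T.image (fun x => ((MulOpposite.unop x : S) : R)) : Finset R) : Set R) := by
        intro x hx
        induction hx using Submodule.span_induction with
        | mem y hy =>
          exact Submodule.subset_span (by
            simp only [Finset.coe_image, Set.mem_image]
            exact ⟨y, hy, rfl⟩)
        | zero => simpa using Submodule.zero_mem _
        | add a b _ _ ha hb => simpa using Submodule.add_mem _ ha hb
        | smul r x _ hx =>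
          have : ((MulOpposite.unop x : S) : R) * ((MulOpposite.unop r : S) : R) ∈ _ :=
            Submodule.smul_mem _ (MulOpposite.op (((MulOpposite.unop r : S) : R))) hx
          simpa using this
      simpa using this _ hmJ
  -- generators pairwise commute
  have hcomm : ∀ x ∈ s, ∀ y ∈ s, x * y = y * x := by
    rintro x (hx | hx) y hy
    · exact (Subring.mem_center_iff.mp (hC hx) y).symm
    · rcases hy with hy | hy
      · exact Subring.mem_center_iff.mp (hC hy) x
      · rw [hsq x hx y hy, hsq y hy x hx]
  intro a b
  have ha : a ∈ S := hStop ▸ Subring.mem_top a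
  have hb : b ∈ S := hStop ▸ Subring.mem_top b
  induction ha, hb using Subring.closure_induction₂ with
  | mem_mem x y hx hy => exact hcomm x hx y hy
  | zero_left x hx => simp
  | zero_right x hx => simp
  | one_left x hx => simp
  | one_right x hx => simp
  | neg_left x y hx hy h => rw [neg_mul, mul_neg, h]
  | neg_right x y hx hy h => rw [neg_mul, mul_neg, h]
  | add_left x y z hx hy hz h1 h2 => rw [add_mul, mul_add, h1, h2]
  | add_right x y z hx hy hz h1 h2 => rw [add_mul, mul_add, h1, h2]
  | mul_left x y z hx hy hz h1 h2 => rw [mul_assoc, h2, ← mul_assoc, h1, mul_assoc]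
  | mul_right x y z hx hy hz h1 h2 => rw [← mul_assoc, h1, mul_assoc, h2, ← mul_assoc]
end

section
/- Let R be a ring and C a central proper subring of R such that every proper subring of R containing C is right Noetherian. Then R satisfies the ascending chain condition on semiprime (two-sided) ideals. -/
/-- A left ideal of `R` is two-sided if it is closed under right multiplication. -/
def IsTwoSidedIdeal {R : Type*} [Ring R] (I : Ideal R) : Prop :=
  ∀ x ∈ I, ∀ r : R, x * r ∈ I

/-- A two-sided ideal `I` is semiprime if every two-sided ideal `A` with `A² ⊆ I`
satisfies `A ⊆ I`. -/
def IsSemiprimeIdeal {R : Type*} [Ring R] (I : Ideal R) : Prop :=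
  IsTwoSidedIdeal I ∧
    ∀ A : Ideal R, IsTwoSidedIdeal A → (∀ a ∈ A, ∀ b ∈ A, a * b ∈ I) → A ≤ I

namespace Stmt3Aux

variable {R : Type*} [Ring R]

lemma smul_op (a b : R) : MulOpposite.op a • b = b * a := by
  rw [MulOpposite.smul_eq_mul_unop]; rfl

lemma rmul_mem (B : Submodule Rᵐᵒᵖ R) {b : R} (hb : b ∈ B) (r : R) : b * r ∈ B := by
  rw [← smul_op]; exact B.smul_mem _ hb

/-- A two-sided ideal viewed as a right ideal. -/
def ridl (I : Ideal R) (hI : IsTwoSidedIdeal I) : Submodule Rᵐᵒᵖ R where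
  carrier := I
  add_mem' := fun ha hb => I.add_mem ha hb
  zero_mem' := I.zero_mem
  smul_mem' := fun c x hx => by
    rw [MulOpposite.smul_eq_mul_unop]; exact hI x hx c.unop

@[simp] lemma mem_ridl {I : Ideal R} {hI : IsTwoSidedIdeal I} {x : R} :
    x ∈ ridl I hI ↔ x ∈ I := Iff.rfl

/-- `x * B` as a right ideal. -/
def lmulS (x : R) (B : Submodule Rᵐᵒᵖ R) : Submodule Rᵐᵒᵖ R where
  carrier := {y | ∃ b ∈ B, y = x * b}
  add_mem' := by
    rintro _ _ ⟨b, hb, rfl⟩ ⟨b', hb', rfl⟩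
    exact ⟨b + b', B.add_mem hb hb', (mul_add x b b').symm⟩
  zero_mem' := ⟨0, B.zero_mem, (mul_zero x).symm⟩
  smul_mem' := by
    rintro c _ ⟨b, hb, rfl⟩
    refine ⟨c • b, B.smul_mem c hb, ?_⟩
    rw [MulOpposite.smul_eq_mul_unop, MulOpposite.smul_eq_mul_unop, mul_assoc]

lemma lmulS_mono (x : R) {B B' : Submodule Rᵐᵒᵖ R} (h : B ≤ B') :
    lmulS x B ≤ lmulS x B' := by
  rintro _ ⟨b, hb, rfl⟩; exact ⟨b, h hb, rfl⟩

variable (C : Subring R)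

/-- The subring `C + B` for a right ideal `B`, given `C` central. -/
def csum (hC : C ≤ Subring.center R) (B : Submodule Rᵐᵒᵖ R) : Subring R where
  carrier := {r | ∃ c ∈ C, ∃ b ∈ B, c + b = r}
  zero_mem' := ⟨0, C.zero_mem, 0, B.zero_mem, by simp⟩
  one_mem' := ⟨1, C.one_mem, 0, B.zero_mem, by simp⟩
  add_mem' := by
    rintro _ _ ⟨c, hc, b, hb, rfl⟩ ⟨c', hc', b', hb', rfl⟩
    exact ⟨c + c', C.add_mem hc hc', b + b', B.add_mem hb hb', by abel⟩
  neg_mem' := by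
    rintro _ ⟨c, hc, b, hb, rfl⟩
    exact ⟨-c, C.neg_mem hc, -b, B.neg_mem hb, by abel⟩
  mul_mem' := by
    rintro _ _ ⟨c, hc, b, hb, rfl⟩ ⟨c', hc', b', hb', rfl⟩
    refine ⟨c * c', C.mul_mem hc hc', c * b' + b * c' + b * b', ?_, ?_⟩
    · have h1 : c * b' = b' * c := (Subring.mem_center_iff.mp (hC hc) b').symm
      have hm1 : c * b' ∈ B := by rw [h1]; exact rmul_mem B hb' c
      have hm2 : b * c' ∈ B := rmul_mem B hb c'
      have hm3 : b * b' ∈ B := rmul_mem B hb b'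
      exact B.add_mem (B.add_mem hm1 hm2) hm3
    · noncomm_ring

lemma le_csum (hC : C ≤ Subring.center R) (B : Submodule Rᵐᵒᵖ R) : C ≤ csum C hC B :=
  fun c hc => ⟨c, hc, 0, B.zero_mem, by simp⟩

lemma mem_csum_of_mem (hC : C ≤ Subring.center R) {B : Submodule Rᵐᵒᵖ R} {b : R}
    (hb : b ∈ B) : b ∈ csum C hC B := ⟨0, C.zero_mem, b, hb, by simp⟩

/-- Pull a right ideal of `R` contained in a subring `S` back to a right ideal of `S`,
viewed as a left ideal of `Sᵐᵒᵖ`. -/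
def toS (S : Subring R) (B : Submodule Rᵐᵒᵖ R) : Submodule (↥S)ᵐᵒᵖ (↥S)ᵐᵒᵖ where
  carrier := {s | (s.unop : R) ∈ B}
  add_mem' := by
    intro a b ha hb
    show ((a + b).unop : R) ∈ B
    have : ((a + b).unop : R) = (a.unop : R) + (b.unop : R) := rfl
    rw [this]; exact B.add_mem ha hb
  zero_mem' := by
    show (((0 : (↥S)ᵐᵒᵖ)).unop : R) ∈ B
    simp
  smul_mem' := by
    intro c a ha
    show (((c • a).unop : R)) ∈ B
    have h1 : (c • a) = c * a := rfl
    have h2 : ((c * a).unop) = a.unop * c.unop := rfl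
    have h3 : (((a.unop * c.unop : S) : R)) = (a.unop : R) * (c.unop : R) := rfl
    rw [h1, h2, h3]
    exact rmul_mem B ha _

lemma stab (S : Subring R) (hS : IsNoetherianRing (↥S)ᵐᵒᵖ)
    (B : ℕ →o Submodule Rᵐᵒᵖ R) (hBS : ∀ n, (B n : Set R) ⊆ (S : Set R)) :
    ∃ v, ∀ m, v ≤ m → B m = B v := by
  have hN : IsNoetherian (↥S)ᵐᵒᵖ (↥S)ᵐᵒᵖ := isNoetherianRing_iff.mp hS
  have hmono : Monotone (fun n => toS S (B n)) := by
    intro a b hab s hs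
    exact B.monotone hab hs
  obtain ⟨v, hv⟩ := monotone_stabilizes_iff_noetherian.mpr hN ⟨fun n => toS S (B n), hmono⟩
  refine ⟨v, fun m hm => ?_⟩
  have h := hv m hm
  apply le_antisymm
  · intro x hx
    have hxS : x ∈ S := hBS m hx
    have : (MulOpposite.op (⟨x, hxS⟩ : S)) ∈ toS S (B m) := hx
    have h2 : (MulOpposite.op (⟨x, hxS⟩ : S)) ∈ toS S (B v) := by
      rw [show toS S (B v) = (⟨fun n => toS S (B n), hmono⟩ : ℕ →o _) v from rfl, h]
      exact this
    exact h2
  · exact B.monotone hm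


variable {R : Type*} [Ring R]

/-- The two-sided ideal generated by `x`, as a left ideal. -/
def tsSpan (x : R) : Ideal R := Ideal.span {y | ∃ r s : R, y = r * x * s}

lemma mem_tsSpan_self (x : R) : x ∈ tsSpan x :=
  Ideal.subset_span ⟨1, 1, by simp⟩

lemma tsSpan_twoSided (x : R) : IsTwoSidedIdeal (tsSpan x) := by
  intro a ha t
  induction ha using Submodule.span_induction with
  | mem y hy => rcases hy with ⟨r, s, rfl⟩; exact Ideal.subset_span ⟨r, s * t, by rw [mul_assoc, mul_assoc]⟩
  | zero => simpa using (tsSpan x).zero_mem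
  | add y z _ _ hy hz => rw [add_mul]; exact add_mem hy hz
  | smul c y _ hy => rw [smul_eq_mul, mul_assoc]; exact Ideal.mul_mem_left _ c hy

lemma sp_elem (I : Ideal R) (hI : IsSemiprimeIdeal I) (x : R)
    (hx : ∀ r : R, x * r * x ∈ I) : x ∈ I := by
  apply hI.2 (tsSpan x) (tsSpan_twoSided x) _ (mem_tsSpan_self x)
  -- ∀ a ∈ tsSpan x, ∀ b ∈ tsSpan x, a * b ∈ I
  intro a ha
  -- predicate: ∀ b ∈ tsSpan x, a * b ∈ I ; do induction on b first with a fixed general? 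
  -- we do: prove ∀ b ∈ tsSpan x, ∀ a ∈ tsSpan x, a * b ∈ I
  suffices h : ∀ b ∈ tsSpan x, ∀ a ∈ tsSpan x, a * b ∈ I by
    intro b hb; exact h b hb a ha
  clear a ha
  intro b hb
  induction hb using Submodule.span_induction with
  | mem y hy =>
    rcases hy with ⟨r', s', rfl⟩
    intro a ha
    induction ha using Submodule.span_induction with
    | mem z hz =>
      rcases hz with ⟨r, s, rfl⟩
      have h1 : x * (s * r') * x ∈ I := hx _
      have h2 : r * (x * (s * r') * x) ∈ I := Ideal.mul_mem_left _ r h1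
      have h3 : (r * (x * (s * r') * x)) * s' ∈ I := hI.1 _ h2 s'
      have heq : r * x * s * (r' * x * s') = (r * (x * (s * r') * x)) * s' := by
        simp [mul_assoc]
      rw [heq]; exact h3
    | zero => simpa using I.zero_mem
    | add z w _ _ hz hw => rw [add_mul]; exact add_mem hz hw
    | smul c z _ hz => rw [smul_eq_mul, mul_assoc]; exact Ideal.mul_mem_left _ c hz
  | zero => intro a _; simpa using I.zero_mem
  | add z w _ _ hz hw => intro a ha; rw [mul_add]; exact add_mem (hz a ha) (hw a ha)
  | smul c z _ hz =>
    intro a ha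
    rw [smul_eq_mul, show a * (c * z) = (a * c) * z by rw [mul_assoc]]
    exact hz _ (tsSpan_twoSided x a ha c)


variable {R : Type*} [Ring R]

def resid (P : Ideal R) (hP : IsTwoSidedIdeal P) (I : Ideal R) (hI : IsTwoSidedIdeal I)
    (x : R) : Submodule Rᵐᵒᵖ R where
  carrier := {s | s ∈ P ∧ x * s ∈ I}
  add_mem' := fun ha hb => ⟨P.add_mem ha.1 hb.1, by rw [mul_add]; exact I.add_mem ha.2 hb.2⟩
  zero_mem' := ⟨P.zero_mem, by rw [mul_zero]; exact I.zero_mem⟩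
  smul_mem' := fun c s hs => by
    rw [MulOpposite.smul_eq_mul_unop]
    exact ⟨hP s hs.1 c.unop, by rw [← mul_assoc]; exact hI _ hs.2 c.unop⟩

@[simp] lemma mem_resid {P : Ideal R} {hP} {I : Ideal R} {hI} {x s : R} :
    s ∈ resid P hP I hI x ↔ s ∈ P ∧ x * s ∈ I := Iff.rfl

lemma finset_bound {α : Type*} (G : ℕ → Ideal R) (Gmono : Monotone G) (s : Finset α)
    (val : α → R) (h : ∀ y ∈ s, ∃ n, val y ∈ G n) : ∃ k, ∀ y ∈ s, val y ∈ G k := by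
  classical
  induction s using Finset.induction_on with
  | empty => exact ⟨0, by simp⟩
  | @insert a t ha ih =>
    obtain ⟨k1, hk1⟩ := ih (fun y hy => h y (Finset.mem_insert_of_mem hy))
    obtain ⟨k2, hk2⟩ := h a (Finset.mem_insert_self a t)
    refine ⟨max k1 k2, fun y hy => ?_⟩
    rcases Finset.mem_insert.mp hy with rfl | hy
    · exact Gmono (le_max_right k1 k2) hk2
    · exact Gmono (le_max_left k1 k2) (hk1 y hy)

/-- The opposite ring of a central subring is isomorphic to itself. -/
def opEquiv (C : Subring R) (hC : C ≤ Subring.center R) : (↥C)ᵐᵒᵖ ≃+* ↥C where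
  toFun := MulOpposite.unop
  invFun := MulOpposite.op
  left_inv := fun a => rfl
  right_inv := fun a => rfl
  map_add' := fun a b => rfl
  map_mul' := fun a b => by
    show (a * b).unop = a.unop * b.unop
    rw [MulOpposite.unop_mul]
    ext
    exact Subring.mem_center_iff.mp (hC a.unop.2) (b.unop : R)


end Stmt3Aux

open Stmt3Aux MulOpposite in
/-- If `C` is a central proper subring of `R` such that every proper subring of `R`
containing `C` is right Noetherian, then `R` has the ascending chain condition on
semiprime two-sided ideals. -/
theorem stmt_3 {R : Type*} [Ring R] (C : Subring R)
    (hC : C ≤ Subring.center R) (hCp : C ≠ ⊤)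
    (hNoeth : ∀ S : Subring R, C ≤ S → S ≠ ⊤ → IsNoetherianRing Sᵐᵒᵖ) :
    ∀ f : ℕ → Ideal R, (∀ n, IsSemiprimeIdeal (f n)) → (∀ n, f n ≤ f (n + 1)) →
      ∃ N, ∀ n, N ≤ n → f n = f N := by
  intro f hsp hmono
  by_contra hcon
  push_neg at hcon
  have fmono : Monotone f := monotone_nat_of_le_succ hmono
  -- Build a strictly increasing subsequence
  choose nf hnf1 hnf2 using hcon
  let F : ℕ → ℕ := fun i => Nat.rec 0 (fun _ k => nf k) i
  set g : ℕ → Ideal R := fun i => f (F i) with hg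
  have gstrict : ∀ i, g i < g (i + 1) := by
    intro i
    exact lt_of_le_of_ne (fmono (hnf1 (F i))) (hnf2 (F i)).symm
  have gsp : ∀ i, IsSemiprimeIdeal (g i) := fun i => hsp (F i)
  -- C is Noetherian
  haveI hCop := hNoeth C le_rfl hCp
  haveI hCN : IsNoetherianRing ↥C := isNoetherianRing_of_ringEquiv _ (opEquiv C hC)
  -- stabilize C ∩ g n
  have jmono : Monotone (fun n => Ideal.comap C.subtype (g n)) := by
    intro a b hab
    exact Ideal.comap_mono (monotone_nat_of_le_succ (fun i => (gstrict i).le) hab)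
  obtain ⟨K, hK⟩ := monotone_stabilizes_iff_noetherian.mpr (isNoetherianRing_iff.mp hCN)
    ⟨fun n => Ideal.comap C.subtype (g n), jmono⟩
  set G : ℕ → Ideal R := fun n => g (n + K) with hG
  have Gstrict : ∀ n, G n < G (n + 1) := by
    intro n
    show g (n + K) < g (n + 1 + K)
    have he : n + 1 + K = n + K + 1 := by omega
    rw [he]
    exact gstrict (n + K)
  have Gmono : Monotone G :=
    monotone_nat_of_le_succ (fun i => (Gstrict i).le)
  have Gsp : ∀ n, IsSemiprimeIdeal (G n) := fun n => gsp (n + K)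
  have GT : ∀ n, IsTwoSidedIdeal (G n) := fun n => (Gsp n).1
  have hconst : ∀ n (c : R), c ∈ C → c ∈ G n → c ∈ G 0 := by
    intro n c hc hcG
    have h1 : (⟨c, hc⟩ : C) ∈ Ideal.comap C.subtype (g (n + K)) := by
      simpa [Ideal.mem_comap] using hcG
    have h2 := hK (n + K) (Nat.le_add_left K n)
    have h3 : (⟨c, hc⟩ : C) ∈ Ideal.comap C.subtype (g K) := by
      rw [show Ideal.comap C.subtype (g K) =
        (⟨fun n => Ideal.comap C.subtype (g n), jmono⟩ : ℕ →o _) K from rfl, h2]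
      exact h1
    show c ∈ g (0 + K)
    rw [Nat.zero_add]
    simpa [Ideal.mem_comap] using h3
  -- the union P
  set P : Ideal R := ⨆ n, G n with hP
  have hdir : Directed (· ≤ ·) G := Gmono.directed_le
  have hPmem : ∀ x : R, x ∈ P ↔ ∃ n, x ∈ G n := fun x =>
    Submodule.mem_iSup_of_directed G hdir
  have PT : IsTwoSidedIdeal P := by
    intro y hy r
    obtain ⟨n, hn⟩ := (hPmem y).mp hy
    exact (hPmem (y * r)).mpr ⟨n, GT n y hn r⟩
  have hCP0 : ∀ c : R, c ∈ C → c ∈ P → c ∈ G 0 := by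
    intro c hc hcP
    obtain ⟨n, hn⟩ := (hPmem c).mp hcP
    exact hconst n c hc hn
  -- pick x ∈ G 1 \ G 0
  obtain ⟨x, hx1, hx0⟩ := SetLike.exists_of_lt (Gstrict 0)
  -- the subring C + G 1
  set S1 : Subring R := csum C hC (ridl (G 1) (GT 1)) with hS1
  by_cases hS1top : S1 = ⊤
  · -- contradiction using strictness at level 1 → 2 and constancy of C ∩ G n
    obtain ⟨y, hy2, hy1⟩ := SetLike.exists_of_lt (Gstrict 1)
    have hyS : y ∈ S1 := hS1top ▸ Subring.mem_top y
    obtain ⟨c, hc, b, hb, hcb⟩ := hyS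
    have hbG1 : b ∈ G 1 := hb
    have hcG2 : c ∈ G 2 := by
      have hce : c = y - b := eq_sub_of_add_eq hcb
      rw [hce]
      exact sub_mem hy2 (Gmono (by norm_num) hbG1)
    have hc0 : c ∈ G 0 := hconst 2 c hc hcG2
    exact hy1 (hcb ▸ (G 1).add_mem (Gmono (by norm_num) hc0) hbG1)
  · haveI hS1N := hNoeth S1 (le_csum C hC _) hS1top
    -- chain B n = x * G n + G 0 of right ideals inside G 1
    have Bmono : Monotone (fun n => lmulS x (ridl (G n) (GT n)) ⊔ ridl (G 0) (GT 0)) := by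
      intro a b hab
      exact sup_le_sup_right (lmulS_mono x (fun t ht => Gmono hab ht)) _
    obtain ⟨v, hv⟩ := stab S1 hS1N ⟨_, Bmono⟩ (by
      intro n y hy
      obtain ⟨b, hb, h0, hh0, hsum⟩ := Submodule.mem_sup.mp hy
      obtain ⟨z, hz, rfl⟩ := hb
      have h1 : x * z ∈ G 1 := GT 1 x hx1 z
      have h2 : (h0 : R) ∈ G 1 := Gmono (by norm_num) hh0
      have : y ∈ G 1 := hsum ▸ (G 1).add_mem h1 h2
      exact mem_csum_of_mem C hC (show y ∈ ridl (G 1) (GT 1) from this))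
    -- the right ideal rB = { s ∈ P | x * s ∈ G 0 }
    set rB : Submodule Rᵐᵒᵖ R := resid P PT (G 0) (GT 0) x with hrB
    set SrB : Subring R := csum C hC rB with hSrB
    by_cases hrBtop : SrB = ⊤
    · -- x * P ⊆ G 0, hence x R x ⊆ G 0, hence x ∈ G 0: contradiction
      have hxP : ∀ p, p ∈ P → x * p ∈ G 0 := by
        intro p hp
        have hpS : p ∈ SrB := hrBtop ▸ Subring.mem_top p
        obtain ⟨c, hc, s, hs, hcs⟩ := hpS
        have hsP : s ∈ P := hs.1
        have hcP : c ∈ P := by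
          have : c = p - s := eq_sub_of_add_eq hcs
          rw [this]; exact P.sub_mem hp hsP
        have hc0 : c ∈ G 0 := hCP0 c hc hcP
        rw [← hcs, mul_add]
        exact (G 0).add_mem (Ideal.mul_mem_left _ x hc0) hs.2
      have hxG0 : x ∈ G 0 := by
        apply sp_elem (G 0) (Gsp 0) x
        intro r
        have hrx : r * x ∈ P := Ideal.mul_mem_left _ r ((le_iSup G 1) hx1)
        have := hxP (r * x) hrx
        rwa [← mul_assoc] at this
      exact hx0 hxG0
    · haveI hrBN := hNoeth SrB (le_csum C hC _) hrBtop
      haveI : IsNoetherian (↥SrB)ᵐᵒᵖ (↥SrB)ᵐᵒᵖ := isNoetherianRing_iff.mp hrBN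
      have hrBfg : (toS SrB rB).FG := IsNoetherian.noetherian _
      obtain ⟨Y, hY⟩ := hrBfg
      have hYm : ∀ y ∈ Y, ∃ n, ((y.unop : ↥SrB) : R) ∈ G n := by
        intro y hy
        have : y ∈ toS SrB rB := by
          rw [← hY]; exact Submodule.subset_span hy
        exact (hPmem _).mp this.1
      obtain ⟨k, hk⟩ := finset_bound G Gmono Y (fun y => ((y.unop : ↥SrB) : R)) hYm
      have hrBk : ∀ s, s ∈ rB → s ∈ G k := by
        intro s hs
        have hsS : s ∈ SrB := mem_csum_of_mem C hC hs
        have hmem : (MulOpposite.op (⟨s, hsS⟩ : ↥SrB)) ∈ toS SrB rB := hs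
        rw [← hY] at hmem
        have : ∀ z ∈ Submodule.span (↥SrB)ᵐᵒᵖ (Y : Set (↥SrB)ᵐᵒᵖ),
            ((z.unop : ↥SrB) : R) ∈ G k := by
          intro z hz
          induction hz using Submodule.span_induction with
          | mem y hy => exact hk y hy
          | zero => simpa using (G k).zero_mem
          | add a b _ _ haa hbb =>
            have : (((a + b).unop : ↥SrB) : R) = ((a.unop : ↥SrB) : R) + ((b.unop : ↥SrB) : R) := rfl
            rw [this]; exact (G k).add_mem haa hbb
          | smul c z _ hzz =>
            have h1 : (((c • z).unop : ↥SrB) : R) = ((z.unop : ↥SrB) : R) * ((c.unop : ↥SrB) : R) := rfl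
            rw [h1]
            exact GT k _ hzz _
        exact this _ hmem
      -- final contradiction
      set m := max v k with hm
      obtain ⟨y, hym1, hym⟩ := SetLike.exists_of_lt (Gstrict m)
      have h1 : x * y ∈ (⟨_, Bmono⟩ : ℕ →o Submodule Rᵐᵒᵖ R) (m + 1) :=
        Submodule.mem_sup_left ⟨y, hym1, rfl⟩
      rw [hv (m + 1) (le_trans (le_max_left v k) (Nat.le_succ m))] at h1
      obtain ⟨b, hb, h0, hh0, hsum⟩ := Submodule.mem_sup.mp h1
      obtain ⟨z, hz, rfl⟩ := hb
      have hyz0 : x * (y - z) ∈ G 0 := by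
        have : x * (y - z) = h0 := by
          rw [mul_sub, ← hsum]; abel
        rw [this]; exact hh0
      have hyzP : y - z ∈ P := P.sub_mem ((le_iSup G (m + 1)) hym1) ((le_iSup G v) hz)
      have hyzk : y - z ∈ G k := hrBk _ ⟨hyzP, hyz0⟩
      have : y ∈ G m := by
        have hye : y = (y - z) + z := by abel
        rw [hye]
        exact (G m).add_mem (Gmono (le_max_right v k) hyzk) (Gmono (le_max_left v k) hz)
      exact hym this
end

section
/- Let R be a prime ring and C a central proper subring of R such that every proper subring of R containing C is right Noetherian. Then R is right Noetherian. -/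
open MulOpposite

namespace Stmt5Aux

variable {A : Type*} [Ring A]

/-- The subring `C + J` for a central subring `C` and a left ideal `J`. -/
def csum (C : Subring A) (hC : C ≤ Subring.center A) (J : Ideal A) : Subring A where
  carrier := {z | ∃ c ∈ C, ∃ j ∈ J, c + j = z}
  zero_mem' := ⟨0, C.zero_mem, 0, J.zero_mem, by simp⟩
  one_mem' := ⟨1, C.one_mem, 0, J.zero_mem, by simp⟩
  add_mem' := by
    rintro x y ⟨c, hc, j, hj, rfl⟩ ⟨c', hc', j', hj', rfl⟩
    exact ⟨c + c', C.add_mem hc hc', j + j', J.add_mem hj hj', by abel⟩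
  neg_mem' := by
    rintro x ⟨c, hc, j, hj, rfl⟩
    exact ⟨-c, C.neg_mem hc, -j, J.neg_mem hj, by abel⟩
  mul_mem' := by
    rintro x y ⟨c, hc, j, hj, rfl⟩ ⟨c', hc', j', hj', rfl⟩
    refine ⟨c * c', C.mul_mem hc hc', c * j' + (j * c' + j * j'), ?_, ?_⟩
    · refine J.add_mem (Ideal.mul_mem_left J c hj') (J.add_mem ?_ (Ideal.mul_mem_left J j hj'))
      have h : j * c' = c' * j := Subring.mem_center_iff.mp (hC hc') j
      rw [h]; exact Ideal.mul_mem_left J c' hj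
    · rw [add_mul, mul_add, mul_add, add_assoc]

lemma mem_csum_of_mem {C : Subring A} {hC : C ≤ Subring.center A} {J : Ideal A}
    {x : A} (hx : x ∈ J) : x ∈ csum C hC J :=
  ⟨0, C.zero_mem, x, hx, zero_add x⟩

lemma le_csum (C : Subring A) (hC : C ≤ Subring.center A) (J : Ideal A) :
    C ≤ csum C hC J :=
  fun c hc => ⟨c, hc, 0, J.zero_mem, add_zero c⟩

/-- The ideal of a subring `S` obtained by intersecting with a (left) ideal of `A`. -/
def pullback (S : Subring A) (J : Ideal A) : Ideal S where
  carrier := {s : S | (s : A) ∈ J}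
  add_mem' := fun {a b} ha hb => J.add_mem ha hb
  zero_mem' := J.zero_mem
  smul_mem' := fun c x hx => Ideal.mul_mem_left J (c : A) hx

lemma coe_span_mem {S : Subring A} (T : Set S) {z : S}
    (hz : z ∈ Ideal.span T) : (z : A) ∈ Ideal.span ((↑) '' T : Set A) := by
  have h : Ideal.span T ≤ pullback S (Ideal.span ((↑) '' T : Set A)) :=
    Submodule.span_le.mpr (fun t ht => Submodule.subset_span (Set.mem_image_of_mem _ ht))
  exact h hz

/-- A left ideal of `A` contained in a Noetherian subring is finitely generated. -/
lemma fg_of_mem_subring (S : Subring A) (hS : IsNoetherianRing S) (J : Ideal A)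
    (hJS : ∀ x ∈ J, x ∈ S) : J.FG := by
  obtain ⟨T, hTfin, hT⟩ := Submodule.fg_def.mp
    (((isNoetherianRing_iff_ideal_fg (↥S)).mp hS) (pullback S J))
  refine Submodule.fg_def.mpr ⟨(↑) '' T, hTfin.image _, le_antisymm ?_ ?_⟩
  · refine Submodule.span_le.mpr ?_
    rintro x ⟨t, ht, rfl⟩
    have h : t ∈ Submodule.span (↥S) T := Submodule.subset_span ht
    rw [hT] at h
    exact h
  · intro x hx
    have h1 : (⟨x, hJS x hx⟩ : S) ∈ pullback S J := hx
    rw [← hT] at h1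
    exact coe_span_mem T h1

/-- A monotone chain of left ideals of `A` contained in a Noetherian subring stabilizes. -/
lemma chain_stab (S : Subring A) (hS : IsNoetherianRing S) (K : ℕ → Ideal A)
    (hmono : Monotone K) (hsub : ∀ n, ∀ x ∈ K n, x ∈ S) :
    ∃ N, ∀ m, N ≤ m → K m = K N := by
  have hnoeth : IsNoetherian S S := isNoetherianRing_iff.mp hS
  obtain ⟨N, hN⟩ := monotone_stabilizes_iff_noetherian.mpr hnoeth
    ⟨fun n => pullback S (K n), fun a b hab x hx => hmono hab hx⟩
  refine ⟨N, fun m hm => ?_⟩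
  have he : pullback S (K N) = pullback S (K m) := hN m hm
  ext x
  constructor
  · intro hx
    have h1 : (⟨x, hsub m x hx⟩ : S) ∈ pullback S (K m) := hx
    rw [← he] at h1
    exact h1
  · exact fun hx => hmono hm hx

/-- The left ideal `J * x`. -/
def rmul (J : Ideal A) (x : A) : Ideal A where
  carrier := {z | ∃ j ∈ J, j * x = z}
  add_mem' := by
    rintro a b ⟨j, hj, rfl⟩ ⟨j', hj', rfl⟩
    exact ⟨j + j', J.add_mem hj hj', (add_mul j j' x)⟩
  zero_mem' := ⟨0, J.zero_mem, zero_mul x⟩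
  smul_mem' := by
    rintro r z ⟨j, hj, rfl⟩
    exact ⟨r * j, Ideal.mul_mem_left J r hj, (mul_assoc r j x)⟩

lemma rmul_mono {J J' : Ideal A} (h : J ≤ J') (x : A) : rmul J x ≤ rmul J' x := by
  rintro z ⟨j, hj, rfl⟩
  exact ⟨j, h hj, rfl⟩

/-- The intersection of a left ideal `J` with the left annihilator of `x`. -/
def annIn (J : Ideal A) (x : A) : Ideal A where
  carrier := {y | y ∈ J ∧ y * x = 0}
  add_mem' := by
    rintro a b ⟨ha, ha0⟩ ⟨hb, hb0⟩
    exact ⟨J.add_mem ha hb, by rw [add_mul, ha0, hb0, add_zero]⟩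
  zero_mem' := ⟨J.zero_mem, zero_mul x⟩
  smul_mem' := by
    rintro r y ⟨hy, hy0⟩
    refine ⟨Ideal.mul_mem_left J r hy, ?_⟩
    show r * y * x = 0
    rw [mul_assoc, hy0, mul_zero]

end Stmt5Aux

open Stmt5Aux in
theorem left_main {A : Type*} [Ring A]
    (hprime : ∀ a b : A, (∀ r : A, a * r * b = 0) → a = 0 ∨ b = 0)
    (C : Subring A) (hC : C ≤ Subring.center A) (hCp : C ≠ ⊤)
    (hN : ∀ S : Subring A, C ≤ S → S ≠ ⊤ → IsNoetherianRing S) :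
    IsNoetherianRing A := by
  rw [isNoetherianRing_iff_ideal_fg]
  intro J
  by_cases h1 : csum C hC J = ⊤
  swap
  · exact fg_of_mem_subring _ (hN _ (le_csum C hC J) h1) J (fun x hx => mem_csum_of_mem hx)
  clear h1
  by_cases h2 : ∃ a : A, a ∈ C ∧ a ∈ J ∧ a ≠ 0
  · -- Case: C ∩ J contains a nonzero (central) element a
    obtain ⟨a, haC, haJ, ha0⟩ := h2
    have haZ : ∀ g : A, g * a = a * g := Subring.mem_center_iff.mp (hC haC)
    have hreg : ∀ u : A, u * a = 0 → u = 0 := by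
      intro u hu
      rcases hprime u a (fun r => by rw [mul_assoc, haZ r, ← mul_assoc, hu, zero_mul]) with h | h
      · exact h
      · exact absurd h ha0
    by_cases h3 : csum C hC (Ideal.span {a}) = ⊤
    · -- C + Aa = A : then J = (C ∩ J) + Aa is f.g. since C is Noetherian
      have hCN : IsNoetherianRing C := hN C le_rfl hCp
      obtain ⟨T, hTfin, hT⟩ := Submodule.fg_def.mp
        (((isNoetherianRing_iff_ideal_fg (↥C)).mp hCN) (pullback C J))
      refine Submodule.fg_def.mpr ⟨insert a ((↑) '' T), (hTfin.image _).insert a,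
        le_antisymm ?_ ?_⟩
      · refine Submodule.span_le.mpr ?_
        intro x hx
        rcases Set.mem_insert_iff.mp hx with rfl | ⟨t, ht, rfl⟩
        · exact haJ
        · have h : t ∈ Submodule.span (↥C) T := Submodule.subset_span ht
          rw [hT] at h
          exact h
      · intro x hx
        have hx' : x ∈ csum C hC (Ideal.span {a}) := h3 ▸ Subring.mem_top x
        obtain ⟨c, hcC, j, hjspan, hsum⟩ := hx'
        have hjJ : j ∈ J := by
          have h : Ideal.span ({a} : Set A) ≤ J :=
            (Submodule.span_singleton_le_iff_mem a J).mpr haJ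
          exact h hjspan
        have hcJ : c ∈ J := by
          have hce : c = x - j := by rw [← hsum]; abel
          rw [hce]; exact J.sub_mem hx hjJ
        have h1' : (⟨c, hcC⟩ : C) ∈ pullback C J := hcJ
        rw [← hT] at h1'
        have hcs : c ∈ Ideal.span ((↑) '' T : Set A) := coe_span_mem T h1'
        have hmono : Ideal.span ((↑) '' T : Set A) ≤ Ideal.span (insert a ((↑) '' T)) :=
          Submodule.span_mono (Set.subset_insert _ _)
        have hjs : j ∈ Ideal.span (insert a ((↑) '' T)) := by
          have h : Ideal.span ({a} : Set A) ≤ Ideal.span (insert a ((↑) '' T)) :=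
            Submodule.span_mono (by simp)
          exact h hjspan
        rw [← hsum]
        exact Submodule.add_mem _ (hmono hcs) hjs
    · -- C + Aa proper: then J·a is f.g. over it, and regularity of a gives J f.g.
      have hSN := hN _ (le_csum C hC (Ideal.span {a})) h3
      have hfgJa : (rmul J a).FG := by
        refine fg_of_mem_subring _ hSN (rmul J a) ?_
        rintro z ⟨j, hj, rfl⟩
        exact mem_csum_of_mem (Submodule.mem_span_singleton.mpr ⟨j, rfl⟩)
      obtain ⟨T, hTfin, hT⟩ := Submodule.fg_def.mp hfgJa
      classical
      have hTmem : ∀ t ∈ T, t ∈ rmul J a := by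
        intro t ht
        rw [← hT]; exact Submodule.subset_span ht
      let g : A → A := fun t => if h : t ∈ rmul J a then h.choose else 0
      have hg : ∀ t ∈ rmul J a, g t ∈ J ∧ g t * a = t := by
        intro t ht
        simp only [g, dif_pos ht]
        exact ⟨ht.choose_spec.1, ht.choose_spec.2⟩
      have hJ₀J : Ideal.span (g '' T) ≤ J := by
        refine Submodule.span_le.mpr ?_
        rintro y ⟨t, ht, rfl⟩
        exact (hg t (hTmem t ht)).1
      have hspan : rmul J a ≤ rmul (Ideal.span (g '' T)) a := by
        rw [← hT]
        refine Submodule.span_le.mpr ?_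
        intro t ht
        exact ⟨g t, Submodule.subset_span ⟨t, ht, rfl⟩, (hg t (hTmem t ht)).2⟩
      have hJJ₀ : J ≤ Ideal.span (g '' T) := by
        intro x hx
        obtain ⟨u, hu, hue⟩ := hspan ⟨x, hx, rfl⟩
        have h0 : (u - x) * a = 0 := by rw [sub_mul, hue, sub_self]
        have hux : u = x := sub_eq_zero.mp (hreg _ h0)
        exact hux ▸ hu
      exact Submodule.fg_def.mpr ⟨g '' T, hTfin.image _, le_antisymm hJ₀J hJJ₀⟩
  · -- Case: C ∩ J = 0
    push_neg at h2
    by_cases hJbot : J = ⊥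
    · rw [hJbot]; exact Submodule.fg_bot
    by_contra hnfg
    -- modular law: if K ≤ J and C + K = A then J = K
    have hmod : ∀ K : Ideal A, K ≤ J → csum C hC K = ⊤ → J = K := by
      intro K hKJ htop
      refine le_antisymm ?_ hKJ
      intro x hx
      obtain ⟨c, hcC, k, hkK, hsum⟩ := (htop ▸ Subring.mem_top x : x ∈ csum C hC K)
      have hcJ : c ∈ J := by
        have hce : c = x - k := by rw [← hsum]; abel
        rw [hce]; exact J.sub_mem hx (hKJ hkK)
      have hc0 : c = 0 := h2 c hcC hcJ
      have : x = k := by rw [← hsum, hc0, zero_add]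
      rw [this]; exact hkK
    -- build a strictly increasing chain of f.g. subideals of J
    have hstep : ∀ K : Ideal A, K.FG → K ≤ J → ∃ x, x ∈ J ∧ x ∉ K := by
      intro K hKfg hKle
      by_contra h
      push_neg at h
      exact hnfg ((le_antisymm h hKle : J = K) ▸ hKfg)
    choose pick hpickJ hpickK using hstep
    let step : {K : Ideal A // K.FG ∧ K ≤ J} → {K : Ideal A // K.FG ∧ K ≤ J} := fun p =>
      ⟨p.1 ⊔ Ideal.span {pick p.1 p.2.1 p.2.2},
        Submodule.FG.sup p.2.1 (Submodule.fg_span_singleton _),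
        sup_le p.2.2 ((Submodule.span_singleton_le_iff_mem _ _).mpr
          (hpickJ p.1 p.2.1 p.2.2))⟩
    let Q : ℕ → {K : Ideal A // K.FG ∧ K ≤ J} := fun n => step^[n] ⟨⊥, Submodule.fg_bot, bot_le⟩
    let K : ℕ → Ideal A := fun n => (Q n).1
    have hQsucc : ∀ n, Q (n + 1) = step (Q n) := fun n => Function.iterate_succ_apply' step n _
    have hKfg : ∀ n, (K n).FG := fun n => (Q n).2.1
    have hKJ : ∀ n, K n ≤ J := fun n => (Q n).2.2
    have hKsucc : ∀ n, K n ≤ K (n + 1) ∧ ∃ x, x ∈ K (n + 1) ∧ x ∉ K n := by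
      intro n
      have h : K (n + 1) = (step (Q n)).1 := congrArg Subtype.val (hQsucc n)
      rw [h]
      refine ⟨le_sup_left, pick (Q n).1 (Q n).2.1 (Q n).2.2, ?_, hpickK (Q n).1 (Q n).2.1 (Q n).2.2⟩
      exact Submodule.mem_sup_right (Submodule.mem_span_singleton_self _)
    have hKmono : Monotone K := monotone_nat_of_le_succ (fun n => (hKsucc n).1)
    have hKL : ∀ n, K n ≤ ⨆ m, K m := le_iSup K
    by_cases hLtop : csum C hC (⨆ m, K m) = ⊤
    swap
    · -- the chain lies in a proper (hence Noetherian) subring: contradiction with strictness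
      obtain ⟨N, hst⟩ := chain_stab _ (hN _ (le_csum C hC _) hLtop) K hKmono
        (fun n x hx => mem_csum_of_mem (hKL n hx))
      obtain ⟨x, hx1, hx2⟩ := (hKsucc N).2
      rw [hst (N + 1) (Nat.le_succ N)] at hx1
      exact hx2 hx1
    have hJL : J = ⨆ m, K m := hmod _ (iSup_le hKJ) hLtop
    have hmemL : ∀ j ∈ J, ∃ n, j ∈ K n := by
      intro j hj
      rw [hJL] at hj
      exact (Submodule.mem_iSup_of_chain ⟨K, hKmono⟩ j).mp hj
    -- key dichotomy: for every x ∈ J, either contradiction or J·x = 0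
    have key : ∀ x ∈ J, ∀ j ∈ J, j * x = 0 := by
      intro x hx
      by_cases hx1 : csum C hC (rmul J x) = ⊤
      · exfalso
        have hrle : rmul J x ≤ J := by
          rintro z ⟨j, hj, rfl⟩
          exact Ideal.mul_mem_left J j hx  -- wrong orientation? j * x with x ∈ J: mul_mem_left gives j * x ∈ J ✓
        have hJr : J = rmul J x := hmod _ hrle hx1
        refine hnfg (Submodule.fg_def.mpr ⟨{x}, Set.finite_singleton x, le_antisymm ?_ ?_⟩)
        · exact (Submodule.span_singleton_le_iff_mem x J).mpr hx
        · rw [hJr]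
          rintro z ⟨j, hj, rfl⟩
          exact Submodule.smul_mem _ j (Submodule.mem_span_singleton_self x)
      · have hSN := hN _ (le_csum C hC (rmul J x)) hx1
        obtain ⟨N, hst⟩ := chain_stab _ hSN (fun n => rmul (K n) x)
          (fun n m hnm => rmul_mono (hKmono hnm) x)
          (fun n z hz => by
            obtain ⟨k, hk, rfl⟩ := hz
            exact mem_csum_of_mem ⟨k, hKJ n hk, rfl⟩)
        by_cases hB : csum C hC (annIn J x) = ⊤
        · have hBJ : annIn J x ≤ J := fun y hy => hy.1
          have hJB : J = annIn J x := hmod _ hBJ hB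
          intro j hj
          exact (hJB ▸ hj : j ∈ annIn J x).2
        · exfalso
          have hBfg : (annIn J x).FG :=
            fg_of_mem_subring _ (hN _ (le_csum C hC _) hB) _
              (fun y hy => mem_csum_of_mem hy)
          refine hnfg ?_
          have hsplit : J = K N ⊔ annIn J x := by
            refine le_antisymm ?_ (sup_le (hKJ N) (fun y hy => hy.1))
            intro j hj
            obtain ⟨n, hn⟩ := hmemL j hj
            have h1 : j * x ∈ rmul (K (max n N)) x := ⟨j, hKmono (le_max_left n N) hn, rfl⟩
            rw [hst (max n N) (le_max_right n N)] at h1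
            obtain ⟨k, hk, hke⟩ := h1
            refine Submodule.mem_sup.mpr ⟨k, hk, j - k, ⟨J.sub_mem hj (hKJ N hk), ?_⟩, by abel⟩
            rw [sub_mul, hke, sub_self]
          rw [hsplit]
          exact Submodule.FG.sup (hKfg N) hBfg
    obtain ⟨a, haJ, ha0⟩ := (Submodule.ne_bot_iff J).mp hJbot
    refine ha0 ?_
    have h := hprime a a (fun r => by
      rw [mul_assoc]
      exact key (r * a) (Ideal.mul_mem_left J r haJ) a haJ)
    exact h.elim id id

/-- If `R` is a prime ring and `C` is a central proper subring of `R` such that every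
proper subring of `R` containing `C` is right Noetherian, then `R` is right Noetherian. -/
theorem stmt_5 {R : Type*} [Ring R]
    (hprime : ∀ a b : R, (∀ r : R, a * r * b = 0) → a = 0 ∨ b = 0)
    (C : Subring R) (hC : C ≤ Subring.center R) (hCp : C ≠ ⊤)
    (hNoeth : ∀ S : Subring R, C ≤ S → S ≠ ⊤ → IsNoetherianRing Sᵐᵒᵖ) :
    IsNoetherianRing Rᵐᵒᵖ := by
  refine left_main ?_ C.op ?_ ?_ ?_
  · intro a b hab
    have h := hprime b.unop a.unop (fun r => by
      have h1 := hab (op r)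
      have h2 : unop (a * op r * b) = unop b * r * unop a := by simp [mul_assoc]
      rw [h1] at h2
      simpa using h2.symm)
    rcases h with h | h
    · exact Or.inr (unop_injective (by simpa using h))
    · exact Or.inl (unop_injective (by simpa using h))
  · intro x hx
    refine Subring.mem_center_iff.mpr (fun g => ?_)
    have hc : x.unop ∈ Subring.center R := hC hx
    have := Subring.mem_center_iff.mp hc g.unop
    rw [← op_unop x, ← op_unop g, ← op_mul, ← op_mul, this]
  · simpa using hCp
  · intro S' hle htop
    have h1 : C ≤ S'.unop := Subring.op_le_iff.mp hle
    have h2 : S'.unop ≠ ⊤ := fun h => htop (by rw [← Subring.op_unop S', h, Subring.op_top])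
    have hne := hNoeth S'.unop h1 h2
    have e := (S'.unop).mopRingEquivOp
    rw [Subring.op_unop] at e
    exact isNoetherianRing_of_ringEquiv _ e
end

section
/- Let R be a ring which is not right Noetherian, and let C be a central proper reduced subring of R such that every proper subring of R containing C is right Noetherian. Then R is isomorphic to the trivial extension of C by the prime radical N of R; that is, R = C ⊕ N as additive groups and N² = 0. -/
/-- A prime (two-sided) ideal of a possibly noncommutative ring. -/
def IsPrimeTwoSidedIdeal {R : Type*} [Ring R] (P : Ideal R) : Prop :=
  IsTwoSidedIdeal P ∧ P ≠ ⊤ ∧ ∀ a b : R, (∀ r : R, a * r * b ∈ P) → a ∈ P ∨ b ∈ P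

/-- The prime radical of `R`: the intersection of all prime two-sided ideals. -/
def primeRadical (R : Type*) [Ring R] : Set R :=
  { x : R | ∀ P : Ideal R, IsPrimeTwoSidedIdeal P → x ∈ P }

open MulOpposite
namespace Stmt7
variable {R : Type*} [Ring R]

theorem mul_right_mem {J : Submodule Rᵐᵒᵖ R} {x : R} (hx : x ∈ J) (r : R) : x * r ∈ J := by
  simpa [MulOpposite.smul_eq_mul_unop] using J.smul_mem (op r) hx

theorem central_comm {C : Subring R} (hC : C ≤ Subring.center R) {c : R} (hc : c ∈ C) (r : R) :
    c * r = r * c := (Subring.mem_center_iff.mp (hC hc) r).symm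

def SJ (C : Subring R) (hC : C ≤ Subring.center R) (J : Submodule Rᵐᵒᵖ R) : Subring R where
  carrier := {r | ∃ c ∈ (C : Set R), ∃ x ∈ J, r = c + x}
  zero_mem' := ⟨0, C.zero_mem, 0, J.zero_mem, by simp⟩
  one_mem' := ⟨1, C.one_mem, 0, J.zero_mem, by simp⟩
  add_mem' := by
    rintro a b ⟨c, hc, x, hx, rfl⟩ ⟨c', hc', x', hx', rfl⟩
    exact ⟨c + c', C.add_mem hc hc', x + x', J.add_mem hx hx', by abel⟩
  neg_mem' := by
    rintro a ⟨c, hc, x, hx, rfl⟩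
    exact ⟨-c, C.neg_mem hc, -x, J.neg_mem hx, by abel⟩
  mul_mem' := by
    rintro a b ⟨c, hc, x, hx, rfl⟩ ⟨c', hc', x', hx', rfl⟩
    refine ⟨c * c', C.mul_mem hc hc', c * x' + x * c' + x * x', ?_, by noncomm_ring⟩
    have h1 : c * x' ∈ J := by
      rw [central_comm hC hc x']; exact mul_right_mem hx' c
    exact J.add_mem (J.add_mem h1 (mul_right_mem hx c')) (mul_right_mem hx x')

theorem mem_SJ {C : Subring R} {hC : C ≤ Subring.center R} {J : Submodule Rᵐᵒᵖ R} {r : R} :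
    r ∈ SJ C hC J ↔ ∃ c ∈ (C : Set R), ∃ x ∈ J, r = c + x := Iff.rfl

theorem C_le_SJ {C : Subring R} (hC : C ≤ Subring.center R) (J : Submodule Rᵐᵒᵖ R) :
    C ≤ SJ C hC J := fun c hc => ⟨c, hc, 0, J.zero_mem, by simp⟩

theorem J_le_SJ {C : Subring R} (hC : C ≤ Subring.center R) (J : Submodule Rᵐᵒᵖ R) {x : R}
    (hx : x ∈ J) : x ∈ SJ C hC J := ⟨0, C.zero_mem, x, hx, by simp⟩

variable {C : Subring R}

/-- key: if `C + J` is a proper subring, then every right ideal inside `J` is f.g. -/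
theorem key_fg (hC : C ≤ Subring.center R)
    (hNoeth : ∀ S : Subring R, C ≤ S → S ≠ ⊤ → IsNoetherianRing Sᵐᵒᵖ)
    (J Q : Submodule Rᵐᵒᵖ R) (hQJ : Q ≤ J) (hne : SJ C hC J ≠ ⊤) : Q.FG := by
  haveI hN : IsNoetherianRing (↥(SJ C hC J))ᵐᵒᵖ := hNoeth _ (C_le_SJ hC J) hne
  let S : Subring R := SJ C hC J
  let Q' : Ideal (↥S)ᵐᵒᵖ :=
    { carrier := {t | ((t.unop : ↥S) : R) ∈ Q}
      zero_mem' := by simp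
      add_mem' := fun {a b} ha hb => by simpa using Q.add_mem ha hb
      smul_mem' := by
        intro u t ht
        have : (((u • t).unop : ↥S) : R) = ((t.unop : ↥S) : R) * ((u.unop : ↥S) : R) := rfl
        show (((u • t).unop : ↥S) : R) ∈ Q
        rw [this]
        exact mul_right_mem (J := Q) ht ((u.unop : ↥S) : R) }
  obtain ⟨T, hT⟩ : Q'.FG := IsNoetherian.noetherian Q'
  let f : (↥S)ᵐᵒᵖ → R := fun t => ((t.unop : ↥S) : R)
  let U : Set R := f '' (T : Set ((↥S)ᵐᵒᵖ))
  rw [Submodule.fg_def]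
  refine ⟨U, (T.finite_toSet).image f, le_antisymm ?_ ?_⟩
  · rw [Submodule.span_le]
    rintro _ ⟨t, ht, rfl⟩
    have : t ∈ Q' := hT ▸ Ideal.subset_span ht
    exact this
  · intro x hx
    have hxS : x ∈ S := J_le_SJ hC J (hQJ hx)
    have hmem : (op (⟨x, hxS⟩ : ↥S)) ∈ Q' := hx
    rw [← hT] at hmem
    have key : ∀ t : (↥S)ᵐᵒᵖ, t ∈ Ideal.span (T : Set ((↥S)ᵐᵒᵖ)) →
        f t ∈ Submodule.span Rᵐᵒᵖ U := by
      intro t ht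
      refine Submodule.span_induction (p := fun t _ => f t ∈ Submodule.span Rᵐᵒᵖ U)
        ?_ ?_ ?_ ?_ ht
      · intro y hy
        show f y ∈ Submodule.span Rᵐᵒᵖ U
        exact Submodule.subset_span ⟨y, hy, rfl⟩
      · show f (0 : (↥S)ᵐᵒᵖ) ∈ Submodule.span Rᵐᵒᵖ U
        have : f (0 : (↥S)ᵐᵒᵖ) = 0 := rfl
        rw [this]; exact Submodule.zero_mem _
      · intro y z _ _ hy hz
        show f (y + z) ∈ Submodule.span Rᵐᵒᵖ U
        have : f (y + z) = f y + f z := rfl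
        rw [this]; exact Submodule.add_mem _ hy hz
      · intro u t _ htmem
        show f (u • t) ∈ Submodule.span Rᵐᵒᵖ U
        have heq : f (u • t) = f t * ((u.unop : ↥S) : R) := rfl
        rw [heq]
        exact mul_right_mem htmem _
    exact key _ hmem

/-- left multiplication as an `Rᵐᵒᵖ`-linear endomorphism of `R` -/
def Lb (b : R) : R →ₗ[Rᵐᵒᵖ] R where
  toFun := fun x => b * x
  map_add' := mul_add b
  map_smul' := fun m x => by simp [MulOpposite.smul_eq_mul_unop, mul_assoc]

@[simp] theorem Lb_apply (b x : R) : Lb b x = b * x := rfl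

theorem sj_top (hC : C ≤ Subring.center R)
    (hNoeth : ∀ S : Subring R, C ≤ S → S ≠ ⊤ → IsNoetherianRing Sᵐᵒᵖ)
    (J : Submodule Rᵐᵒᵖ R) (hJ : ¬ J.FG) : SJ C hC J = ⊤ := by
  by_contra h
  exact hJ (key_fg hC hNoeth J J le_rfl h)

theorem decompJ (hC : C ≤ Subring.center R)
    (hNoeth : ∀ S : Subring R, C ≤ S → S ≠ ⊤ → IsNoetherianRing Sᵐᵒᵖ)
    (J : Submodule Rᵐᵒᵖ R) (hJ : ¬ J.FG) (r : R) :
    ∃ c ∈ (C : Set R), ∃ x ∈ J, r = c + x := by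
  have h : r ∈ SJ C hC J := by rw [sj_top hC hNoeth J hJ]; exact Subring.mem_top r
  exact h

theorem exists_DJ_gens (hC : C ≤ Subring.center R) (hNC : IsNoetherianRing ↥C)
    (J : Submodule Rᵐᵒᵖ R) :
    ∃ V : Set R, V.Finite ∧ (∀ v ∈ V, v ∈ C ∧ v ∈ J) ∧
      ∀ c, c ∈ C → c ∈ J → c ∈ Submodule.span Rᵐᵒᵖ V := by
  haveI := hNC
  let DJ : Ideal ↥C :=
    { carrier := {c | (c : R) ∈ J}
      zero_mem' := by simp
      add_mem' := fun {a b} ha hb => by simpa using J.add_mem ha hb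
      smul_mem' := by
        intro u c hc
        show ((u * c : ↥C) : R) ∈ J
        have h1 : ((u * c : ↥C) : R) = (c : R) * (u : R) := by
          push_cast
          exact central_comm hC u.2 (c : R)
        rw [h1]
        exact mul_right_mem hc (u : R) }
  obtain ⟨T, hT⟩ : DJ.FG := IsNoetherian.noetherian DJ
  refine ⟨(fun c : ↥C => (c : R)) '' (T : Set ↥C), (T.finite_toSet).image _, ?_, ?_⟩
  · rintro _ ⟨c, hc, rfl⟩
    have : c ∈ DJ := hT ▸ Ideal.subset_span hc
    exact ⟨c.2, this⟩
  · intro c hcC hcJ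
    have hmem : (⟨c, hcC⟩ : ↥C) ∈ Ideal.span (T : Set ↥C) := by rw [hT]; exact hcJ
    have key : ∀ d : ↥C, d ∈ Ideal.span (T : Set ↥C) →
        (d : R) ∈ Submodule.span Rᵐᵒᵖ ((fun c : ↥C => (c : R)) '' (T : Set ↥C)) := by
      intro d hd
      refine Submodule.span_induction
        (p := fun (d : ↥C) (_ : d ∈ Ideal.span (T : Set ↥C)) =>
          ((d : R) ∈ Submodule.span Rᵐᵒᵖ ((fun c : ↥C => (c : R)) '' (T : Set ↥C))))
        ?_ ?_ ?_ ?_ hd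
      · intro y hy
        exact Submodule.subset_span ⟨y, hy, rfl⟩
      · show ((0 : ↥C) : R) ∈ _
        simpa using Submodule.zero_mem _
      · intro y z _ _ hy hz
        show ((y + z : ↥C) : R) ∈ _
        push_cast
        exact Submodule.add_mem _ hy hz
      · intro u d _ hdmem
        show ((u • d : ↥C) : R) ∈ _
        have h1 : ((u • d : ↥C) : R) = (d : R) * (u : R) := by
          show ((u * d : ↥C) : R) = (d : R) * (u : R)
          push_cast
          exact central_comm hC u.2 (d : R)
        rw [h1]
        exact mul_right_mem hdmem (u : R)
    exact key _ hmem

theorem split_fg (hC : C ≤ Subring.center R) (hNC : IsNoetherianRing ↥C)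
    {J A : Submodule Rᵐᵒᵖ R} (hAJ : A ≤ J) (hSA : SJ C hC A = ⊤) (hAfg : A.FG) : J.FG := by
  obtain ⟨V, hVfin, hVsub, hVspan⟩ := exists_DJ_gens hC hNC J
  have hJeq : J = Submodule.span Rᵐᵒᵖ V ⊔ A := by
    apply le_antisymm
    · intro x hx
      have hxS : x ∈ SJ C hC A := by rw [hSA]; exact Subring.mem_top x
      obtain ⟨c, hc, a, ha, rfl⟩ := hxS
      have hcJ : c ∈ J := by
        have : c = (c + a) - a := by abel
        rw [this]
        exact J.sub_mem hx (hAJ ha)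
      exact Submodule.add_mem _ (le_sup_left (α := Submodule Rᵐᵒᵖ R)
        (hVspan c hc hcJ)) (le_sup_right (α := Submodule Rᵐᵒᵖ R) ha)
    · refine sup_le ?_ hAJ
      rw [Submodule.span_le]
      intro v hv
      exact (hVsub v hv).2
  rw [hJeq]
  exact Submodule.FG.sup (Submodule.fg_def.mpr ⟨V, hVfin, rfl⟩) hAfg

theorem ann_top (hC : C ≤ Subring.center R)
    (hNoeth : ∀ S : Subring R, C ≤ S → S ≠ ⊤ → IsNoetherianRing Sᵐᵒᵖ)
    (hNC : IsNoetherianRing ↥C)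
    {J : Submodule Rᵐᵒᵖ R} (hJ : ¬ J.FG) {b : R} (hb : b ∈ J) :
    SJ C hC (J ⊓ LinearMap.ker (Lb b)) = ⊤ := by
  by_contra hne
  have hAfg : (J ⊓ LinearMap.ker (Lb b)).FG := key_fg hC hNoeth _ _ le_rfl hne
  have hbspan : Submodule.span Rᵐᵒᵖ {b} ≤ J := by
    rw [Submodule.span_le]; simpa using hb
  have hbne : SJ C hC (Submodule.span Rᵐᵒᵖ {b}) ≠ ⊤ := by
    intro htop
    exact hJ (split_fg hC hNC hbspan htop (Submodule.fg_span_singleton b))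
  have hmaple : Submodule.map (Lb b) J ≤ Submodule.span Rᵐᵒᵖ {b} := by
    rintro _ ⟨x, hx, rfl⟩
    show b * x ∈ _
    have : b * x = (op x) • b := by simp [MulOpposite.smul_eq_mul_unop]
    rw [this]
    exact Submodule.smul_mem _ _ (Submodule.subset_span rfl)
  have hmap : (Submodule.map (Lb b) J).FG :=
    key_fg hC hNoeth (Submodule.span Rᵐᵒᵖ {b}) _ hmaple hbne
  exact hJ (Submodule.fg_of_fg_map_of_fg_inf_ker (Lb b) hmap hAfg)

theorem ann_nfg (hC : C ≤ Subring.center R)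
    (hNoeth : ∀ S : Subring R, C ≤ S → S ≠ ⊤ → IsNoetherianRing Sᵐᵒᵖ)
    (hNC : IsNoetherianRing ↥C)
    {J : Submodule Rᵐᵒᵖ R} (hJ : ¬ J.FG) {b : R} (hb : b ∈ J) :
    ¬ (J ⊓ LinearMap.ker (Lb b)).FG :=
  fun h => hJ (split_fg hC hNC inf_le_left (ann_top hC hNoeth hNC hJ hb) h)

theorem bx_eq (hC : C ≤ Subring.center R)
    (hNoeth : ∀ S : Subring R, C ≤ S → S ≠ ⊤ → IsNoetherianRing Sᵐᵒᵖ)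
    (hNC : IsNoetherianRing ↥C)
    {J : Submodule Rᵐᵒᵖ R} (hJ : ¬ J.FG) {b : R} (hb : b ∈ J) :
    ∀ x ∈ J, ∃ c, c ∈ C ∧ c ∈ J ∧ b * x = b * c := by
  intro x hx
  have h : x ∈ SJ C hC (J ⊓ LinearMap.ker (Lb b)) := by
    rw [ann_top hC hNoeth hNC hJ hb]; exact Subring.mem_top x
  obtain ⟨c, hc, a, ha, rfl⟩ := h
  have haJ : a ∈ J := ha.1
  have hab : b * a = 0 := ha.2
  have hcJ : c ∈ J := by
    have : c = (c + a) - a := by abel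
    rw [this]
    exact J.sub_mem hx haJ
  exact ⟨c, hc, hcJ, by rw [mul_add, hab, add_zero]⟩

end Stmt7

open Stmt7

/-- If `R` is not right Noetherian and `C` is a central proper reduced subring of `R`
such that every proper subring of `R` containing `C` is right Noetherian, then `R` is
the trivial extension of `C` by the prime radical `N`: `R = C ⊕ N` as additive groups
and `N² = 0`. -/
theorem stmt_7 {R : Type*} [Ring R] (hR : ¬ IsNoetherianRing Rᵐᵒᵖ)
    (C : Subring R) (hC : C ≤ Subring.center R) (hCp : C ≠ ⊤)
    (hred : ∀ x ∈ C, ∀ n : ℕ, x ^ (n + 1) = 0 → x = 0)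
    (hNoeth : ∀ S : Subring R, C ≤ S → S ≠ ⊤ → IsNoetherianRing Sᵐᵒᵖ) :
    (∀ r : R, ∃ c ∈ C, ∃ n ∈ primeRadical R, r = c + n) ∧
      (∀ x, x ∈ (C : Set R) → x ∈ primeRadical R → x = 0) ∧
      (∀ x ∈ primeRadical R, ∀ y ∈ primeRadical R, x * y = 0) := by
  classical
  letI instC : CommRing ↥C :=
    { (inferInstance : Ring ↥C) with
      mul_comm := fun a b => Subtype.ext (central_comm hC a.2 (b : R)) }
  haveI hNCop : IsNoetherianRing (↥C)ᵐᵒᵖ := hNoeth C le_rfl hCp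
  haveI hNC : IsNoetherianRing ↥C :=
    isNoetherianRing_of_ringEquiv _ (RingEquiv.toOpposite ↥C).symm
  -- existence of a non-f.g. right ideal
  have hex : ∃ J : Submodule Rᵐᵒᵖ R, ¬ J.FG := by
    by_contra h
    push_neg at h
    apply hR
    haveI h1 : IsNoetherian Rᵐᵒᵖ R := isNoetherian_def.mpr h
    let e : R ≃ₗ[Rᵐᵒᵖ] Rᵐᵒᵖ :=
      { toFun := MulOpposite.op
        invFun := MulOpposite.unop
        left_inv := fun _ => rfl
        right_inv := fun _ => rfl
        map_add' := fun _ _ => rfl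
        map_smul' := fun _ _ => rfl }
    exact isNoetherianRing_iff.mpr (isNoetherian_of_linearEquiv e)
  obtain ⟨J₀, hJ₀⟩ := hex
  -- annihilators in C
  let annC : Submodule Rᵐᵒᵖ R → Ideal ↥C := fun J =>
    { carrier := {c | ∀ x ∈ J, (c : R) * x = 0}
      zero_mem' := by intro x _; simp
      add_mem' := by
        intro a b ha hb x hx
        show ((a + b : ↥C) : R) * x = 0
        push_cast [add_mul]
        rw [ha x hx, hb x hx, add_zero]
      smul_mem' := by
        intro u c hc x hx
        show ((u * c : ↥C) : R) * x = 0
        push_cast [mul_assoc]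
        rw [hc x hx, mul_zero] }
  let Efam : Set (Ideal ↥C) := {E | ∃ J : Submodule Rᵐᵒᵖ R, ¬J.FG ∧ E = annC J}
  have hEne : Efam.Nonempty := ⟨annC J₀, J₀, hJ₀, rfl⟩
  obtain ⟨Estar, ⟨K, hK, hEK⟩, hmax⟩ :=
    (set_has_maximal_iff_noetherian.mpr (isNoetherianRing_iff.mp hNC)) Efam hEne
  -- K has square zero
  have Ksq : ∀ x ∈ K, ∀ y ∈ K, x * y = 0 := by
    by_contra hcon
    push_neg at hcon
    obtain ⟨b, hb, x₀, hx₀, hbx₀⟩ := hcon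
    obtain ⟨d, hdC, hdK, hbd⟩ := bx_eq hC hNoeth hNC hK hb x₀ hx₀
    have hbdne : b * d ≠ 0 := by rw [← hbd]; exact hbx₀
    have hdb : d * b ≠ 0 := by rw [central_comm hC hdC b]; exact hbdne
    have hA'nfg : ¬ (K ⊓ LinearMap.ker (Lb d)).FG := ann_nfg hC hNoeth hNC hK hdK
    have hEle : Estar ≤ annC (K ⊓ LinearMap.ker (Lb d)) := by
      rw [hEK]
      intro c hc x hx
      exact hc x ((Submodule.mem_inf.mp hx).1)
    have hdmem : (⟨d, hdC⟩ : ↥C) ∈ annC (K ⊓ LinearMap.ker (Lb d)) := by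
      intro x hx
      exact (Submodule.mem_inf.mp hx).2
    have hdnot : (⟨d, hdC⟩ : ↥C) ∉ Estar := by
      rw [hEK]
      intro hcontra
      exact hdb (hcontra b hb)
    exact hmax _ ⟨_, hA'nfg, rfl⟩
      (lt_of_le_of_ne hEle (fun h => hdnot (h ▸ hdmem)))
  -- consequences
  have decom : ∀ r : R, ∃ c ∈ (C : Set R), ∃ k ∈ K, r = c + k := decompJ hC hNoeth K hK
  have hCK0 : ∀ c : R, c ∈ C → c ∈ K → c = 0 := by
    intro c hcC hcK
    have h2 : c ^ (1 + 1) = 0 := by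
      rw [pow_two]
      exact Ksq c hcK c hcK
    exact hred c hcC 1 h2
  have hdiff : ∀ u v : R, u ∈ C → v ∈ C → u - v ∈ K → u = v := by
    intro u v hu hv hK'
    exact sub_eq_zero.mp (hCK0 (u - v) (C.sub_mem hu hv) hK')
  have hlmul : ∀ r : R, ∀ k ∈ K, r * k ∈ K := by
    intro r k hk
    obtain ⟨c, hc, k', hk', rfl⟩ := decom r
    have heq : (c + k') * k = k * c + k' * k := by rw [add_mul, central_comm hC hc k]
    rw [heq, Ksq k' hk' k hk, add_zero]
    exact mul_right_mem hk c
  -- K is inside the prime radical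
  have hKN : ∀ k ∈ K, k ∈ primeRadical R := by
    intro k hk P hP
    have hzero : ∀ r : R, k * r * k = 0 := by
      intro r
      obtain ⟨c, hc, k', hk', rfl⟩ := decom r
      have h1 : k * (c + k') * k = c * (k * k) + (k * k') * k := by
        rw [mul_add, add_mul, ← central_comm hC hc k]
        noncomm_ring
      rw [h1, Ksq k hk k hk, Ksq k hk k' hk', mul_zero, zero_mul, add_zero]
    rcases hP.2.2 k k (fun r => by rw [hzero r]; exact P.zero_mem) with h | h <;> exact h
  -- the prime radical is inside K : via primes of C
  have hPp : ∀ p : Ideal ↥C, p.IsPrime →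
      ∃ P : Ideal R, IsPrimeTwoSidedIdeal P ∧ ∀ c : ↥C, (c : R) ∈ P → c ∈ p := by
    intro p hp
    let P : Ideal R :=
      { carrier := {r | ∃ cp : ↥C, cp ∈ p ∧ ∃ k ∈ K, r = (cp : R) + k}
        zero_mem' := ⟨0, p.zero_mem, 0, K.zero_mem, by simp⟩
        add_mem' := by
          rintro a b ⟨cp, hcp, k, hk, rfl⟩ ⟨cp', hcp', k', hk', rfl⟩
          exact ⟨cp + cp', p.add_mem hcp hcp', k + k', K.add_mem hk hk', by push_cast; abel⟩
        smul_mem' := by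
          intro r x hx
          obtain ⟨cp, hcp, k, hk, rfl⟩ := hx
          obtain ⟨c, hcC, k', hk', rfl⟩ := decom r
          refine ⟨⟨c, hcC⟩ * cp, p.mul_mem_left _ hcp,
            c * k + k' * (cp : R) + k' * k, ?_, ?_⟩
          · exact K.add_mem (K.add_mem (hlmul c k hk) (mul_right_mem hk' (cp : R)))
              (mul_right_mem hk' k)
          · show (c + k') * ((cp : R) + k) = ((⟨c, hcC⟩ * cp : ↥C) : R) + (c * k + k' * (cp : R) + k' * k)
            push_cast
            noncomm_ring }
    have hPmem : ∀ r : R, r ∈ P ↔ ∃ cp : ↥C, cp ∈ p ∧ ∃ k ∈ K, r = (cp : R) + k := fun r => Iff.rfl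
    have hext : ∀ c : ↥C, (c : R) ∈ P → c ∈ p := by
      intro c hcP
      obtain ⟨cp, hcp, k, hk, heq⟩ := hcP
      have : (c : R) = (cp : R) := by
        apply hdiff _ _ c.2 cp.2
        have : (c : R) - (cp : R) = k := by rw [heq]; abel
        rw [this]; exact hk
      have hccp : c = cp := Subtype.ext this
      rw [hccp]; exact hcp
    refine ⟨P, ⟨?_, ?_, ?_⟩, hext⟩
    · -- two-sided
      rintro x ⟨cp, hcp, k, hk, rfl⟩ r
      obtain ⟨c, hcC, k', hk', rfl⟩ := decom r
      refine ⟨cp * ⟨c, hcC⟩, p.mul_mem_right _ hcp,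
        (cp : R) * k' + k * c + k * k', ?_, ?_⟩
      · exact K.add_mem (K.add_mem (hlmul (cp : R) k' hk') (mul_right_mem hk c))
          (mul_right_mem hk k')
      · show ((cp : R) + k) * (c + k') = ((cp * ⟨c, hcC⟩ : ↥C) : R) + ((cp : R) * k' + k * c + k * k')
        push_cast
        noncomm_ring
    · -- not top
      intro htop
      have h1 : (1 : R) ∈ P := htop ▸ Submodule.mem_top
      obtain ⟨cp, hcp, k, hk, heq⟩ := h1
      have : (1 : R) = (cp : R) := by
        apply hdiff _ _ C.one_mem cp.2
        have : (1 : R) - (cp : R) = k := by rw [heq]; abel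
        rw [this]; exact hk
      have : (1 : ↥C) = cp := Subtype.ext (by simpa using this)
      exact hp.ne_top (Ideal.eq_top_iff_one p |>.mpr (this ▸ hcp))
    · -- prime
      intro a b hab
      have h1 : a * b ∈ P := by simpa using hab 1
      obtain ⟨ca, hca, ka, hka, rfl⟩ := decom a
      obtain ⟨cb, hcb, kb, hkb, rfl⟩ := decom b
      have hprod : (ca + ka) * (cb + kb) = ca * cb + (ca * kb + ka * cb + ka * kb) := by
        noncomm_ring
      obtain ⟨cp, hcp, k, hk, heq⟩ := h1
      have hκ : ca * kb + ka * cb + ka * kb ∈ K :=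
        K.add_mem (K.add_mem (hlmul ca kb hkb) (mul_right_mem hka cb)) (mul_right_mem hka kb)
      have heq2 : ca * cb = (cp : R) := by
        apply hdiff _ _ (C.mul_mem hca hcb) cp.2
        have : ca * cb - (cp : R) = k - (ca * kb + ka * cb + ka * kb) := by
          rw [sub_eq_sub_iff_add_eq_add]
          calc ca * cb + (ca * kb + ka * cb + ka * kb) = (ca + ka) * (cb + kb) := hprod.symm
            _ = (cp : R) + k := heq
            _ = k + (cp : R) := by abel
        rw [this]
        exact K.sub_mem hk hκ
      have hcc : (⟨ca, hca⟩ * ⟨cb, hcb⟩ : ↥C) ∈ p := by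
        have : (⟨ca, hca⟩ * ⟨cb, hcb⟩ : ↥C) = cp := Subtype.ext (by push_cast; exact heq2)
        rw [this]; exact hcp
      rcases hp.mem_or_mem hcc with h | h
      · exact Or.inl ⟨⟨ca, hca⟩, h, ka, hka, rfl⟩
      · exact Or.inr ⟨⟨cb, hcb⟩, h, kb, hkb, rfl⟩
  have hNK : ∀ x ∈ primeRadical R, x ∈ K := by
    intro x hx
    obtain ⟨c, hcC, k, hk, rfl⟩ := decom x
    suffices hc0 : c = 0 by rw [hc0, zero_add]; exact hk
    have hcN : ∀ P : Ideal R, IsPrimeTwoSidedIdeal P → c ∈ P := by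
      intro P hP
      have h1 : c + k ∈ P := hx P hP
      have h2 : k ∈ P := hKN k hk P hP
      simpa using P.sub_mem h1 h2
    have hnil : IsNilpotent (⟨c, hcC⟩ : ↥C) := by
      rw [← mem_nilradical, nilradical_eq_sInf, Ideal.mem_sInf]
      intro p hp
      obtain ⟨P, hPprime, hPext⟩ := hPp p hp
      exact hPext ⟨c, hcC⟩ (hcN P hPprime)
    obtain ⟨n, hn⟩ := hnil
    have hcn : c ^ n = 0 := by
      have h := congrArg (Subtype.val) hn
      push_cast at h
      exact h
    cases n with
    | zero =>
      rw [pow_zero] at hcn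
      calc c = c * 1 := (mul_one c).symm
        _ = 0 := by rw [hcn, mul_zero]
    | succ m => exact hred c hcC m hcn
  refine ⟨?_, ?_, ?_⟩
  · intro r
    obtain ⟨c, hc, k, hk, rfl⟩ := decom r
    exact ⟨c, hc, k, hKN k hk, rfl⟩
  · intro x hxC hxN
    exact hCK0 x hxC (hNK x hxN)
  · intro x hx y hy
    exact Ksq x (hNK x hx) y (hNK y hy)
end

section
/- Let p be a prime and R an 𝔽_p-algebra such that every proper subring of R is right Artinian. Then R is right Artinian. -/
/-!
Pass to `A = Rᵐᵒᵖ`, whose left ideals are the right ideals of `R`. If `A` had a strictly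
descending chain of left ideals `I₀ > I₁ > I₂ > ⋯`, the subring generated by `I₂` would be
`ℤ·1 + I₂`, which still contains the chain `I₂ > I₃ > ⋯` and so is not Artinian; hence it
is all of `A`. Then an element of `I₁ \ I₂` has the form `n + x` with `x ∈ I₂`, so `n·1` is a
nonzero element of `I₁`. In characteristic `p` it is a unit, forcing `I₁ = A`, which
contradicts `I₁ < I₀`.
-/

section

variable {A : Type*} [Ring A]

theorem Ideal.exists_intCast_sub_mem_of_mem_closure (K : Ideal A) {x : A}
    (hx : x ∈ Subring.closure (K : Set A)) : ∃ n : ℤ, x - n ∈ K := by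
  induction hx using Subring.closure_induction with
  | mem y hy => exact ⟨0, by simpa using hy⟩
  | zero => exact ⟨0, by simp⟩
  | one => exact ⟨1, by simp⟩
  | add y z _ _ ihy ihz =>
    obtain ⟨n, hn⟩ := ihy
    obtain ⟨m, hm⟩ := ihz
    exact ⟨n + m, by convert K.add_mem hn hm using 1; push_cast; abel⟩
  | neg y _ ihy =>
    obtain ⟨n, hn⟩ := ihy
    exact ⟨-n, by convert K.neg_mem hn using 1; push_cast; abel⟩
  | mul y z _ _ ihy ihz =>
    obtain ⟨n, hn⟩ := ihy
    obtain ⟨m, hm⟩ := ihz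
    refine ⟨n * m, ?_⟩
    have hyz : y * (z - m) ∈ K := K.mul_mem_left y hm
    have hmy : (m : A) * (y - n) ∈ K := K.mul_mem_left _ hn
    convert K.add_mem hyz hmy using 1
    rw [mul_sub, mul_sub, (Int.cast_commute m y).eq, mul_comm n, Int.cast_mul]
    abel

theorem Ideal.closure_ne_top_of_lt
    (hcast : ∀ n : ℤ, (n : A) = 0 ∨ IsUnit (n : A)) {L K : Ideal A} (hLK : L < K)
    (hK : K ≠ ⊤) : Subring.closure (L : Set A) ≠ ⊤ := by
  intro htop
  obtain ⟨x, hxK, hxL⟩ := SetLike.exists_of_lt hLK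
  obtain ⟨n, hn⟩ := L.exists_intCast_sub_mem_of_mem_closure (htop ▸ Subring.mem_top x)
  rcases hcast n with hzero | hunit
  · exact hxL (by simpa [hzero] using hn)
  · have hnK : (n : A) ∈ K := by simpa using K.sub_mem hxK (hLK.le hn)
    exact hK (K.eq_top_of_isUnit_mem hnK hunit)

theorem Subring.not_isArtinianRing_of_strictAnti (S : Subring A) {f : ℕ → Ideal A}
    (hf : StrictAnti f) (hS : (f 0 : Set A) ⊆ S) : ¬ IsArtinianRing S := by
  intro hArt
  refine not_strictAnti_of_wellFoundedLT (fun n ↦ (f n).comap S.subtype) fun m n hmn ↦ ?_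
  obtain ⟨x, hxm, hxn⟩ := SetLike.exists_of_lt (hf hmn)
  refine lt_of_le_of_ne (Ideal.comap_mono (hf hmn).le) fun heq ↦ hxn ?_
  have hxS : x ∈ S := hS (hf.antitone (Nat.zero_le m) hxm)
  exact (SetLike.ext_iff.1 heq ⟨x, hxS⟩).2 hxm

theorem isArtinianRing_of_forall_subring_ne_top
    (hcast : ∀ n : ℤ, (n : A) = 0 ∨ IsUnit (n : A))
    (hArt : ∀ S : Subring A, S ≠ ⊤ → IsArtinianRing S) : IsArtinianRing A := by
  refine ⟨RelEmbedding.wellFounded_iff_isEmpty.2 ⟨fun f ↦ ?_⟩⟩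
  have hf : StrictAnti f := fun _ _ h ↦ f.map_rel_iff.2 h
  have hclosure : Subring.closure (f 2 : Set A) ≠ ⊤ :=
    Ideal.closure_ne_top_of_lt hcast (hf one_lt_two) (hf zero_lt_one).ne_top
  exact (Subring.closure _).not_isArtinianRing_of_strictAnti
    (f := fun n ↦ f (n + 2)) (hf.comp_strictMono (strictMono_id.add_const 2))
    Subring.subset_closure (hArt _ hclosure)

end

theorem intCast_eq_zero_or_isUnit {K A : Type*} [Field K] [Ring A] [Algebra K A] (n : ℤ) :
    (n : A) = 0 ∨ IsUnit (n : A) := by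
  rw [← map_intCast (algebraMap K A)]
  by_cases hn : (n : K) = 0
  · exact Or.inl (by rw [hn, map_zero])
  · exact Or.inr ((IsUnit.mk0 _ hn).map _)

/-- If `p` is a prime and `R` is an `𝔽ₚ`-algebra all of whose proper subrings are
right Artinian, then `R` is right Artinian. -/
theorem stmt_14 {p : ℕ} [Fact p.Prime] {R : Type*} [Ring R] [Algebra (ZMod p) R]
    (hArt : ∀ S : Subring R, S ≠ ⊤ → IsArtinianRing Sᵐᵒᵖ) :
    IsArtinianRing Rᵐᵒᵖ := by
  refine isArtinianRing_of_forall_subring_ne_top (intCast_eq_zero_or_isUnit (K := ZMod p))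
    fun S hS ↦ ?_
  have hunop : S.unop ≠ ⊤ := by
    intro h
    exact hS (by rw [← S.op_unop, h, Subring.op_top])
  have : IsArtinianRing S.unopᵐᵒᵖ := hArt S.unop hunop
  have hop : IsArtinianRing S.unop.op := S.unop.mopRingEquivOp.surjective.isArtinianRing
  rwa [Subring.op_unop] at hop
end
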